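/- arXiv:1812.00368 — 14 statements merged into one kernel-verified Lean document; each statement's English description precedes it below -/
import Mathlib

section
/- Let W be a weighing matrix W(n,m), let B be an n×b point-by-block incidence matrix of an (r,λ)-design on n points, and let G = [W|B] be the n×(n+b) block matrix over F_q obtained by reducing entries modulo p. If (r + (n−1)λ + m) ≠ 0 and (r − λ + m) ≠ 0 in F_q, then G generates an LCD code C of length n+b and dimension n over F_q. -/
open Matrix BigOperators

/-- The row span of a matrix `G`: the linear code generated by the rows of `G`. -/
def rowSpan (F : Type*) [Field F] {k ι : Type*} (G : Matrix k ι F) : Submodule F (ι → F) :=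
  Submodule.span F (Set.range fun i => G i)

/-- The dual of a linear code under the standard dot product. -/
def dualCode {F : Type*} [Field F] {ι : Type*} [Fintype ι] (C : Submodule F (ι → F)) :
    Submodule F (ι → F) where
  carrier := {v | ∀ c ∈ C, v ⬝ᵥ c = 0}
  add_mem' := by
    intro a b ha hb c hc
    rw [add_dotProduct, ha c hc, hb c hc, add_zero]
  zero_mem' := by
    intro c hc
    rw [zero_dotProduct]
  smul_mem' := by
    intro r a ha c hc
    rw [smul_dotProduct, ha c hc, smul_zero]

/-- A linear code is LCD (linear complementary dual) if it meets its dual trivially. -/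
def IsLCD {F : Type*} [Field F] {ι : Type*} [Fintype ι] (C : Submodule F (ι → F)) : Prop :=
  C ⊓ dualCode C = ⊥

lemma aux_inv {F : Type*} [Field F] {n : ℕ} (a c : F) (ha : a ≠ 0) (hanc : a + n * c ≠ 0) :
    ∃ N, (a • (1 : Matrix (Fin n) (Fin n) F) + c • Matrix.of (fun _ _ => (1:F))) * N = 1 := by
  set J : Matrix (Fin n) (Fin n) F := Matrix.of (fun _ _ => (1:F)) with hJ
  have hJJ : J * J = (n : F) • J := by
    ext i j; simp [hJ, Matrix.mul_apply]
  set d : F := -c / (a * (a + n * c)) with hd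
  refine ⟨a⁻¹ • 1 + d • J, ?_⟩
  rw [Matrix.add_mul, Matrix.mul_add, Matrix.mul_add]
  simp only [smul_mul_assoc, Matrix.mul_smul, Matrix.one_mul, Matrix.mul_one, hJJ, smul_smul]
  rw [mul_inv_cancel₀ ha, one_smul]
  have : a * d + (c * a⁻¹ + c * (d * n)) = 0 := by
    rw [hd, div_eq_mul_inv, mul_inv]; linear_combination (-c * a⁻¹) * mul_inv_cancel₀ hanc
  rw [add_assoc, ← add_smul, ← add_smul, this, zero_smul, add_zero]


/-- If `W` is a weighing matrix `W(n,m)`, `B` is the `n × b`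
point-by-block incidence matrix of an `(r,λ)`-design on `n` points, and
`G = [W | B]` over the finite field `F`, then provided `r + (n-1)λ + m ≠ 0` and
`r - λ + m ≠ 0` in `F`, the matrix `G` generates an LCD code of length `n + b`
and dimension `n` over `F`. -/
theorem statement1 {F : Type*} [Field F] [Fintype F] {n b m r lam : ℕ}
    (hr : 0 < r) (hlam : 0 < lam)
    (W : Matrix (Fin n) (Fin n) ℤ)
    (hWent : ∀ i j, W i j = 0 ∨ W i j = 1 ∨ W i j = -1)
    (hW : W * Wᵀ = (m : ℤ) • (1 : Matrix (Fin n) (Fin n) ℤ))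
    (B : Matrix (Fin n) (Fin b) ℤ)
    (hBent : ∀ i j, B i j = 0 ∨ B i j = 1)
    (hB : B * Bᵀ = ((r : ℤ) - (lam : ℤ)) • (1 : Matrix (Fin n) (Fin n) ℤ)
          + Matrix.of (fun _ _ => (lam : ℤ)))
    (h1 : (r : F) + ((n : F) - 1) * (lam : F) + (m : F) ≠ 0)
    (h2 : (r : F) - (lam : F) + (m : F) ≠ 0)
    (G : Matrix (Fin n) (Fin n ⊕ Fin b) F)
    (hG : G = Matrix.fromCols (W.map (Int.cast : ℤ → F)) (B.map (Int.cast : ℤ → F))) :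
    IsLCD (rowSpan F G) ∧ Module.finrank F (rowSpan F G) = n := by
  set a : F := (r : F) - (lam : F) + (m : F) with ha_def
  have hanc : a + (n : F) * (lam : F) ≠ 0 := by
    intro h; apply h1; rw [← h, ha_def]; ring
  -- G * Gᵀ = a • 1 + lam • J
  have hM : G * Gᵀ = a • (1 : Matrix (Fin n) (Fin n) F)
      + (lam : F) • Matrix.of (fun _ _ => (1:F)) := by
    subst hG
    rw [transpose_fromCols, fromCols_mul_fromRows]
    ext i j
    have hWij := congrFun (congrFun hW i) j
    have hBij := congrFun (congrFun hB i) j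
    simp only [Matrix.mul_apply, Matrix.transpose_apply, Matrix.smul_apply, Matrix.one_apply,
      Matrix.add_apply, Matrix.of_apply, smul_eq_mul] at hWij hBij ⊢
    simp only [Matrix.map_apply]
    have hcW : (∑ k, (W i k : F) * (W j k : F)) = ((∑ k, W i k * W j k : ℤ) : F) := by
      push_cast; ring
    have hcB : (∑ k, (B i k : F) * (B j k : F)) = ((∑ k, B i k * B j k : ℤ) : F) := by
      push_cast; ring
    rw [hcW, hcB, hWij, hBij]
    by_cases h : i = j <;> simp [h, ha_def] <;> push_cast <;> ring
  obtain ⟨N, hN⟩ := aux_inv a (lam : F) h2 hanc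
  rw [← hM] at hN
  -- vecMul injectivity
  have hinj : ∀ x : Fin n → F, x ᵥ* G = 0 → x = 0 := by
    intro x hx
    have : x ᵥ* (G * Gᵀ * N) = 0 := by
      rw [← Matrix.vecMul_vecMul, ← Matrix.vecMul_vecMul, hx]
      simp
    rwa [hN, Matrix.vecMul_one] at this
  have hrange : rowSpan F G = LinearMap.range G.vecMulLinear := by
    rw [range_vecMulLinear]; rfl
  constructor
  · -- LCD
    rw [IsLCD, Submodule.eq_bot_iff]
    rintro v ⟨hv1, hv2⟩
    rw [hrange] at hv1
    obtain ⟨x, hx⟩ := hv1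
    rw [Matrix.vecMulLinear_apply] at hx
    have hrows : ∀ j, v ⬝ᵥ G j = 0 := by
      intro j
      exact hv2 (G j) (Submodule.subset_span ⟨j, rfl⟩)
    have hxM : x ᵥ* (G * Gᵀ) = 0 := by
      rw [← Matrix.vecMul_vecMul, hx]
      ext j
      have := hrows j
      simpa [Matrix.vecMul, dotProduct, Matrix.transpose_apply, mul_comm] using this
    have hx0 : x = 0 := by
      have : x ᵥ* (G * Gᵀ * N) = 0 := by
        rw [← Matrix.vecMul_vecMul, hxM]; simp
      rwa [hN, Matrix.vecMul_one] at this
    rw [← hx, hx0, Matrix.zero_vecMul]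
  · -- dimension
    rw [hrange]
    have hinj' : Function.Injective G.vecMulLinear := by
      rw [injective_iff_map_eq_zero]
      intro x hx
      exact hinj x (by rwa [Matrix.vecMulLinear_apply] at hx)
    rw [LinearMap.finrank_range_of_inj hinj']
    simp
end

section
/- Let M be an n×n matrix over F_q, let α ∈ F_q with α ≠ 0, and suppose G = [M|I_n] generates a code C of dimension n and length 2n over F_q, while Ḡ = [M|α·I_n] generates the dual code C⊥. Then C is formally self-dual: for every integer w with 0 ≤ w ≤ 2n, the number of codewords of Hamming weight w in C equals the number of codewords of Hamming weight w in C⊥. -/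
open Matrix BigOperators

/-- Let `M` be an `n × n` matrix over the finite field `F`, `α ≠ 0`,
and suppose `G = [M | I_n]` generates a code `C` of dimension `n` (and length `2n`),
while `Ḡ = [M | α·I_n]` generates the dual code `C⊥`.  Then `C` is formally self-dual:
for every `w` with `0 ≤ w ≤ 2n`, the number of codewords of Hamming weight `w` in `C`
equals the number of codewords of Hamming weight `w` in `C⊥`. -/
theorem statement2 {F : Type*} [Field F] [Fintype F] [DecidableEq F] {n : ℕ}
    (M : Matrix (Fin n) (Fin n) F) (α : F) (hα : α ≠ 0)
    (G Gbar : Matrix (Fin n) (Fin n ⊕ Fin n) F)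
    (hG : G = Matrix.fromCols M (1 : Matrix (Fin n) (Fin n) F))
    (hGbar : Gbar = Matrix.fromCols M (α • (1 : Matrix (Fin n) (Fin n) F)))
    (hdim : Module.finrank F (rowSpan F G) = n)
    (hdual : rowSpan F Gbar = dualCode (rowSpan F G)) :
    ∀ w : ℕ, w ≤ 2 * n →
      {c ∈ (rowSpan F G : Set ((Fin n ⊕ Fin n) → F)) | hammingNorm c = w}.ncard =
      {c ∈ (dualCode (rowSpan F G) : Set ((Fin n ⊕ Fin n) → F)) | hammingNorm c = w}.ncard := by
  intro w hw
  classical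
  set d : Fin n ⊕ Fin n → F := Sum.elim (fun _ => (1:F)) (fun _ => α) with hd
  have hdne : ∀ i, d i ≠ 0 := by rintro (i|i) <;> simp [hd, hα]
  let f : ((Fin n ⊕ Fin n) → F) →ₗ[F] ((Fin n ⊕ Fin n) → F) :=
    { toFun := fun v i => d i * v i
      map_add' := by intro v u; funext i; simp [mul_add]
      map_smul' := by intro r v; funext i; simp [mul_comm, mul_assoc, mul_left_comm] }
  have hinj : Function.Injective f := fun v u h =>
    funext fun i => mul_left_cancel₀ (hdne i) (congrFun h i)
  have hrow : ∀ i, f (G i) = Gbar i := by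
    intro i
    funext j
    cases j with
    | inl j => simp [f, hG, hGbar, hd, Matrix.fromCols]
    | inr j => simp [f, hG, hGbar, hd, Matrix.fromCols, Matrix.one_apply, mul_ite]
  have hmap : Submodule.map f (rowSpan F G) = rowSpan F Gbar := by
    rw [rowSpan, rowSpan, Submodule.map_span]
    congr 1
    rw [← Set.range_comp]
    exact congrArg Set.range (funext hrow)
  have hnorm : ∀ v : (Fin n ⊕ Fin n) → F, hammingNorm (f v) = hammingNorm v := by
    intro v
    simp only [hammingNorm]
    congr 1
    ext i
    simp [f, mul_ne_zero_iff, hdne i]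
  have himg : f '' {c ∈ (rowSpan F G : Set ((Fin n ⊕ Fin n) → F)) | hammingNorm c = w} =
      {c ∈ (dualCode (rowSpan F G) : Set ((Fin n ⊕ Fin n) → F)) | hammingNorm c = w} := by
    ext v
    constructor
    · rintro ⟨c, ⟨hc, hcw⟩, rfl⟩
      refine ⟨?_, by rw [hnorm c]; exact hcw⟩
      rw [← hdual, ← hmap]
      exact ⟨c, hc, rfl⟩
    · rintro ⟨hv, hvw⟩
      rw [← hdual, ← hmap] at hv
      obtain ⟨c, hc, rfl⟩ := hv
      exact ⟨c, ⟨hc, by rw [← hnorm c]; exact hvw⟩, rfl⟩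
  rw [← himg, Set.ncard_image_of_injective _ hinj]
end

section
/- Let W be a weighing matrix W(n,m) and let G = [W|I_n] be the n×2n block matrix over F_q obtained by reducing entries modulo p. If m + 1 ≠ 0 in F_q, then G generates an LCD code C of length 2n and dimension n over F_q. -/
open Matrix BigOperators

/-- Let `W` be a weighing matrix `W(n,m)` and `G = [W | I_n]` over the
finite field `F`.  If `m + 1 ≠ 0` in `F`, then `G` generates an LCD code of length `2n`
and dimension `n` over `F`. -/
theorem statement4 {F : Type*} [Field F] [Fintype F] {n m : ℕ}
    (W : Matrix (Fin n) (Fin n) ℤ)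
    (hWent : ∀ i j, W i j = 0 ∨ W i j = 1 ∨ W i j = -1)
    (hW : W * Wᵀ = (m : ℤ) • (1 : Matrix (Fin n) (Fin n) ℤ))
    (hm : (m : F) + 1 ≠ 0)
    (G : Matrix (Fin n) (Fin n ⊕ Fin n) F)
    (hG : G = Matrix.fromCols (W.map (Int.cast : ℤ → F)) (1 : Matrix (Fin n) (Fin n) F)) :
    IsLCD (rowSpan F G) ∧ Module.finrank F (rowSpan F G) = n := by

  have hGG : G * Gᵀ = ((m : F) + 1) • (1 : Matrix (Fin n) (Fin n) F) := by
    subst hG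
    rw [Matrix.transpose_fromCols, Matrix.fromCols_mul_fromRows]
    have h1 : W.map (Int.cast : ℤ → F) = W.map (Int.castRingHom F) := rfl
    rw [h1, ← Matrix.transpose_map, ← Matrix.map_mul, hW, Matrix.transpose_one, mul_one]
    ext i j
    rw [Matrix.add_apply, Matrix.map_apply, Matrix.smul_apply, Matrix.smul_apply,
      Matrix.one_apply, Matrix.one_apply]
    split_ifs <;> simp [smul_eq_mul, zsmul_eq_mul] <;> push_cast <;> ring
  have key : ∀ (x : Fin n → F) (j : Fin n), (x ᵥ* G) ⬝ᵥ G j = ((m : F) + 1) * x j := by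
    intro x j
    have h : (x ᵥ* G) ⬝ᵥ G j = ((x ᵥ* G) ᵥ* Gᵀ) j := rfl
    rw [h, Matrix.vecMul_vecMul, hGG]
    simp [Matrix.vecMul, dotProduct, Matrix.smul_apply, Matrix.one_apply,
      mul_ite, Finset.sum_ite_eq', mul_comm]
  have hx0 : ∀ x : Fin n → F, (∀ j, (x ᵥ* G) ⬝ᵥ G j = 0) → x = 0 := by
    intro x hx
    funext j
    have := hx j
    rw [key x j] at this
    exact (mul_eq_zero.mp this).resolve_left hm
  have hsum : ∀ x : Fin n → F, ∑ i, x i • G i = x ᵥ* G := by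
    intro x
    funext j
    simp [Matrix.vecMul, dotProduct, Finset.sum_apply, smul_eq_mul]
  have hli : LinearIndependent F (fun i => G i) := by
    rw [Fintype.linearIndependent_iff]
    intro x hx i
    have : x = 0 := by
      apply hx0
      intro j
      rw [← hsum, hx, zero_dotProduct]
    rw [this]; rfl
  constructor
  · rw [IsLCD, Submodule.eq_bot_iff]
    intro v hv
    obtain ⟨hv1, hv2⟩ := Submodule.mem_inf.mp hv
    obtain ⟨x, hxv⟩ := (Submodule.mem_span_range_iff_exists_fun F).mp hv1
    rw [hsum] at hxv
    have hxz : x = 0 := by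
      apply hx0
      intro j
      rw [hxv]
      exact hv2 (G j) (Submodule.subset_span ⟨j, rfl⟩)
    rw [← hxv, hxz, Matrix.zero_vecMul]
  · rw [rowSpan, finrank_span_eq_card hli, Fintype.card_fin]
end

section
/- Let W be a weighing matrix W(n,m), let C be the code over F_q generated by G = [W|I_n], and suppose m ≠ 0 in F_q. Let α ∈ F_q satisfy α + m = 0 in F_q. Then the matrix Ḡ = [W|α·I_n] generates the dual code C⊥, i.e., the row span of Ḡ equals C⊥. -/
open Matrix BigOperators

lemma dualCode_rowSpan_eq_ker {F : Type*} [Field F] {k ι : Type*} [Fintype ι] [Fintype k]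
    (G : Matrix k ι F) : dualCode (rowSpan F G) = LinearMap.ker G.mulVecLin := by
  ext v
  constructor
  · intro hv
    simp only [LinearMap.mem_ker, Matrix.mulVecLin_apply]
    funext i
    rw [Matrix.mulVec, Pi.zero_apply]
    rw [dotProduct_comm]
    exact hv (G i) (Submodule.subset_span ⟨i, rfl⟩)
  · intro hv c hc
    simp only [LinearMap.mem_ker, Matrix.mulVecLin_apply] at hv
    induction hc using Submodule.span_induction with
    | mem x hx =>
      obtain ⟨i, rfl⟩ := hx
      rw [dotProduct_comm]
      have := congrFun hv i
      rwa [Matrix.mulVec, Pi.zero_apply] at this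
    | zero => simp
    | add x y _ _ hx hy => rw [dotProduct_add, hx, hy, add_zero]
    | smul r x _ hx => rw [dotProduct_smul, hx, smul_zero]

lemma rowSpan_eq_range {F : Type*} [Field F] {k ι : Type*} [Fintype k]
    (G : Matrix k ι F) : rowSpan F G = LinearMap.range Gᵀ.mulVecLin := by
  rw [Matrix.range_mulVecLin, rowSpan]
  rfl

/-- Let `W` be a weighing matrix `W(n,m)`, let `C` be the code over the
finite field `F` generated by `G = [W | I_n]`, suppose `m ≠ 0` in `F` and let `α ∈ F`
satisfy `α + m = 0`.  Then `Ḡ = [W | α·I_n]` generates the dual code `C⊥`. -/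
theorem statement5 {F : Type*} [Field F] [Fintype F] {n m : ℕ}
    (W : Matrix (Fin n) (Fin n) ℤ)
    (hWent : ∀ i j, W i j = 0 ∨ W i j = 1 ∨ W i j = -1)
    (hW : W * Wᵀ = (m : ℤ) • (1 : Matrix (Fin n) (Fin n) ℤ))
    (hm : (m : F) ≠ 0) (α : F) (hα : α + (m : F) = 0)
    (G Gbar : Matrix (Fin n) (Fin n ⊕ Fin n) F)
    (hG : G = Matrix.fromCols (W.map (Int.cast : ℤ → F)) (1 : Matrix (Fin n) (Fin n) F))
    (hGbar : Gbar = Matrix.fromCols (W.map (Int.cast : ℤ → F)) (α • (1 : Matrix (Fin n) (Fin n) F))) :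
    rowSpan F Gbar = dualCode (rowSpan F G) := by
  have hα' : α = -(m : F) := eq_neg_of_add_eq_zero_left hα
  have hαne : α ≠ 0 := by rw [hα']; simpa using hm
  set Wf : Matrix (Fin n) (Fin n) F := W.map (Int.cast : ℤ → F) with hWf
  have hWfW : Wf * Wfᵀ = (m : F) • (1 : Matrix (Fin n) (Fin n) F) := by
    ext i j
    have h0 := congrFun (congrFun hW i) j
    rw [Matrix.mul_apply] at h0
    simp only [Matrix.smul_apply, Matrix.one_apply, smul_eq_mul, Matrix.transpose_apply] at h0
    have h1 := congrArg (Int.cast : ℤ → F) h0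
    push_cast at h1
    simpa [hWf, Matrix.mul_apply, Matrix.smul_apply, Matrix.one_apply, Matrix.map_apply,
      apply_ite (Int.cast : ℤ → F)] using h1
  -- G * Gbarᵀ = 0
  have hGGbar : G * Gbarᵀ = 0 := by
    rw [hG, hGbar, Matrix.transpose_fromCols, Matrix.fromCols_mul_fromRows]
    rw [hWfW]
    ext i j
    by_cases h : i = j <;>
      simp [Matrix.transpose_smul, Matrix.one_apply, h, mul_comm, hα', Matrix.smul_apply]
  -- ranks
  have hrankG : G.rank = n := by
    have h1 : G * Matrix.fromRows (0 : Matrix (Fin n) (Fin n) F) (1 : Matrix (Fin n) (Fin n) F) = 1 := by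
      rw [hG, Matrix.fromCols_mul_fromRows]
      simp
    have := Matrix.rank_mul_le_left G (Matrix.fromRows (0 : Matrix (Fin n) (Fin n) F) (1 : Matrix (Fin n) (Fin n) F))
    rw [h1, Matrix.rank_one] at this
    have h2 := Matrix.rank_le_card_height G
    simp only [Fintype.card_fin] at this h2
    omega
  have hrankGbar : Gbar.rank = n := by
    have h1 : Gbar * Matrix.fromRows (0 : Matrix (Fin n) (Fin n) F) (α⁻¹ • (1 : Matrix (Fin n) (Fin n) F)) = 1 := by
      rw [hGbar, Matrix.fromCols_mul_fromRows]
      rw [Matrix.mul_zero, zero_add, Matrix.smul_mul, Matrix.mul_smul, Matrix.one_mul,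
        smul_smul, mul_inv_cancel₀ hαne, one_smul]
    have := Matrix.rank_mul_le_left Gbar (Matrix.fromRows (0 : Matrix (Fin n) (Fin n) F) (α⁻¹ • (1 : Matrix (Fin n) (Fin n) F)))
    rw [h1, Matrix.rank_one] at this
    have h2 := Matrix.rank_le_card_height Gbar
    simp only [Fintype.card_fin] at this h2
    omega
  -- inclusion
  have hle : rowSpan F Gbar ≤ dualCode (rowSpan F G) := by
    rw [dualCode_rowSpan_eq_ker, rowSpan, Submodule.span_le]
    rintro _ ⟨i, rfl⟩
    simp only [SetLike.mem_coe, LinearMap.mem_ker, Matrix.mulVecLin_apply]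
    funext j
    have := congrFun (congrFun hGGbar j) i
    simpa [Matrix.mul_apply, Matrix.mulVec, dotProduct] using this
  -- dimension count
  have hdimDual : Module.finrank F (dualCode (rowSpan F G)) = n := by
    rw [dualCode_rowSpan_eq_ker]
    have h := LinearMap.finrank_range_add_finrank_ker G.mulVecLin
    rw [show Module.finrank F (Fin n ⊕ Fin n → F) = n + n by
      simp [Module.finrank_pi]] at h
    have : Module.finrank F (LinearMap.range G.mulVecLin) = n := hrankG
    omega
  have hdimBar : Module.finrank F (rowSpan F Gbar) = n := by
    rw [rowSpan_eq_range]
    have : Gbarᵀ.rank = Gbar.rank := Matrix.rank_transpose Gbar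
    rw [Matrix.rank] at this
    rw [this, hrankGbar]
  exact Submodule.eq_of_le_of_finrank_le hle (by rw [hdimDual, hdimBar])
end

section
/- Let W be a weighing matrix W(n,m) with m + 1 ≠ 0 and m ≠ 0 in F_q, let C be the code over F_q generated by G = [W|I_n] with rows r_1,…,r_n, and let Ḡ = [W|(−m)·I_n] have rows r̄_1,…,r̄_n. Let d be the minimum Hamming weight of a nonzero codeword of C and t = ⌊(d−1)/2⌋. Let J ⊆ {1,…,n} with |J| ≤ t and let λ_i ∈ F_q with λ_i ≠ 0 for each i ∈ J. Then the Hamming distance between Σ_{i∈J} λ_i·r̄_i and Σ_{i∈J} λ_i·r_i equals |J|, and every codeword c ∈ C with c ≠ Σ_{i∈J} λ_i·r_i satisfies hammingDist(c, Σ_{i∈J} λ_i·r̄_i) > |J|; that is, Σ_{i∈J} λ_i·r_i is the unique codeword of C closest to Σ_{i∈J} λ_i·r̄_i. -/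
open Matrix BigOperators

/-- With `W` a weighing matrix `W(n,m)`, `m + 1 ≠ 0` and `m ≠ 0` in the
finite field `F`, `C` the code generated by `G = [W | I_n]` with rows `r_i`, and
`Ḡ = [W | (-m)·I_n]` with rows `r̄_i`: if `d` is the minimum weight of a nonzero codeword
of `C`, `t = ⌊(d-1)/2⌋`, `J` has at most `t` elements and `λ_i ≠ 0` for `i ∈ J`, then
`Σ_{i∈J} λ_i·r_i` is at Hamming distance `|J|` from `Σ_{i∈J} λ_i·r̄_i`, and every other
codeword of `C` is at distance greater than `|J|` from `Σ_{i∈J} λ_i·r̄_i`. -/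
theorem statement6 {F : Type*} [Field F] [Fintype F] [DecidableEq F] {n m : ℕ}
    (W : Matrix (Fin n) (Fin n) ℤ)
    (hWent : ∀ i j, W i j = 0 ∨ W i j = 1 ∨ W i j = -1)
    (hW : W * Wᵀ = (m : ℤ) • (1 : Matrix (Fin n) (Fin n) ℤ))
    (hm1 : (m : F) + 1 ≠ 0) (hm : (m : F) ≠ 0)
    (G Gbar : Matrix (Fin n) (Fin n ⊕ Fin n) F)
    (hG : G = Matrix.fromCols (W.map (Int.cast : ℤ → F)) (1 : Matrix (Fin n) (Fin n) F))
    (hGbar : Gbar = Matrix.fromCols (W.map (Int.cast : ℤ → F))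
      ((-(m : F)) • (1 : Matrix (Fin n) (Fin n) F)))
    (d : ℕ)
    (hd : IsLeast {w : ℕ | ∃ c ∈ rowSpan F G, c ≠ 0 ∧ hammingNorm c = w} d)
    (J : Finset (Fin n)) (hJ : J.card ≤ (d - 1) / 2)
    (lam : Fin n → F) (hlam : ∀ i ∈ J, lam i ≠ 0) :
    hammingDist (∑ i ∈ J, lam i • Gbar i) (∑ i ∈ J, lam i • G i) = J.card ∧
    ∀ c ∈ rowSpan F G, c ≠ ∑ i ∈ J, lam i • G i →
      J.card < hammingDist c (∑ i ∈ J, lam i • Gbar i) := by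
  classical
  subst hG hGbar
  set Wc := W.map (Int.cast : ℤ → F) with hWcdef
  set x := ∑ i ∈ J, lam i • Matrix.fromCols Wc (1 : Matrix (Fin n) (Fin n) F) i with hx
  set y := ∑ i ∈ J, lam i • Matrix.fromCols Wc
      ((-(m : F)) • (1 : Matrix (Fin n) (Fin n) F)) i with hy
  have hne : (-(m : F) - 1) ≠ 0 := by
    intro h; apply hm1; linear_combination -h
  have hyx : ∀ z, y z - x z = Sum.elim (fun _ => (0 : F))
      (fun j => if j ∈ J then lam j * (-(m : F) - 1) else 0) z := by
    intro z
    rw [hx, hy]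
    simp only [Finset.sum_apply, Pi.smul_apply, smul_eq_mul]
    rw [← Finset.sum_sub_distrib]
    cases z with
    | inl j => simp [Matrix.fromCols_apply_inl]
    | inr j =>
      simp only [Matrix.fromCols_apply_inr, Matrix.smul_apply, Matrix.one_apply,
        smul_eq_mul, Sum.elim_inr]
      by_cases hj : j ∈ J
      · rw [Finset.sum_eq_single j]
        · simp [hj]; ring
        · intro b _ hb; simp [hb]
        · intro h; exact absurd hj h
      · simp only [hj, if_false]
        apply Finset.sum_eq_zero
        intro i hi
        have : i ≠ j := fun h => hj (h ▸ hi)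
        simp [this]
  have hfilter : (Finset.univ.filter fun z => y z ≠ x z)
      = J.map ⟨Sum.inr, Sum.inr_injective⟩ := by
    ext z
    simp only [Finset.mem_filter, Finset.mem_univ, true_and, Finset.mem_map,
      Function.Embedding.coeFn_mk]
    have hz := hyx z
    constructor
    · intro h
      cases z with
      | inl j => exact absurd (sub_eq_zero.mp (by simpa using hz)) h
      | inr j =>
        by_cases hj : j ∈ J
        · exact ⟨j, hj, rfl⟩
        · exfalso; have := hz; simp [hj] at this; exact h (sub_eq_zero.mp this)
    · rintro ⟨j, hj, rfl⟩
      intro h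
      rw [h, sub_self] at hz
      simp only [Sum.elim_inr, hj, if_true] at hz
      exact mul_ne_zero (hlam j hj) hne hz.symm
  have hdist : hammingDist y x = J.card := by
    rw [hammingDist, hfilter, Finset.card_map]
  have hxC : x ∈ rowSpan F (Matrix.fromCols Wc (1 : Matrix (Fin n) (Fin n) F)) :=
    Submodule.sum_mem _ fun i _ =>
      Submodule.smul_mem _ _ (Submodule.subset_span ⟨i, rfl⟩)
  refine ⟨hdist, ?_⟩
  intro c hc hcx
  have hcd : d ≤ hammingDist c x := by
    rw [hammingDist_eq_hammingNorm]
    exact hd.2 ⟨c - x, Submodule.sub_mem _ hc hxC, sub_ne_zero.mpr hcx, by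
      rw [← hammingDist_eq_hammingNorm, hammingDist_comm, hammingDist_eq_hammingNorm, neg_add_eq_sub]⟩
  have hd1 : 1 ≤ d := by
    obtain ⟨c0, _, hc0, hn⟩ := hd.1
    rcases Nat.eq_zero_or_pos d with h0 | h
    · exact absurd (hammingNorm_eq_zero.mp (hn.trans h0)) hc0
    · exact h
  have htri := hammingDist_triangle c y x
  omega
end

section
/- Let W be a skew-weighing matrix W(n,m), let B be an n×b point-by-block incidence matrix of an (r,λ)-design on n points, let α ∈ F_q, and let G = [W + α·I_n | B] over F_q (entries of W and B reduced modulo p). If (m + α² + r + (n−1)λ) ≠ 0 and (m + α² + r − λ) ≠ 0 in F_q, then G generates an LCD code C of length n+b and dimension n over F_q. -/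
open Matrix BigOperators

/-- If `W` is a skew-weighing matrix `W(n,m)`, `B` is the `n × b`
point-by-block incidence matrix of an `(r,λ)`-design on `n` points, `α ∈ F`, and
`G = [W + α·I_n | B]` over the finite field `F`, then provided
`m + α² + r + (n-1)λ ≠ 0` and `m + α² + r - λ ≠ 0` in `F`, the matrix `G` generates
an LCD code of length `n + b` and dimension `n` over `F`. -/
theorem statement7 {F : Type*} [Field F] [Fintype F] {n b m r lam : ℕ}
    (hr : 0 < r) (hlam : 0 < lam)
    (W : Matrix (Fin n) (Fin n) ℤ)
    (hWent : ∀ i j, W i j = 0 ∨ W i j = 1 ∨ W i j = -1)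
    (hW : W * Wᵀ = (m : ℤ) • (1 : Matrix (Fin n) (Fin n) ℤ))
    (hskew : Wᵀ = -W)
    (B : Matrix (Fin n) (Fin b) ℤ)
    (hBent : ∀ i j, B i j = 0 ∨ B i j = 1)
    (hB : B * Bᵀ = ((r : ℤ) - (lam : ℤ)) • (1 : Matrix (Fin n) (Fin n) ℤ)
          + Matrix.of (fun _ _ => (lam : ℤ)))
    (α : F)
    (h1 : (m : F) + α ^ 2 + (r : F) + ((n : F) - 1) * (lam : F) ≠ 0)
    (h2 : (m : F) + α ^ 2 + (r : F) - (lam : F) ≠ 0)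
    (G : Matrix (Fin n) (Fin n ⊕ Fin b) F)
    (hG : G = Matrix.fromCols
      (W.map (Int.cast : ℤ → F) + α • (1 : Matrix (Fin n) (Fin n) F))
      (B.map (Int.cast : ℤ → F))) :
    IsLCD (rowSpan F G) ∧ Module.finrank F (rowSpan F G) = n := by
  have key : ∀ c : Fin n → F, c ᵥ* (G * Gᵀ) = 0 → c = 0 := by
    set W' : Matrix (Fin n) (Fin n) F := W.map (Int.cast : ℤ → F) with hW'def
    set B' : Matrix (Fin n) (Fin b) F := B.map (Int.cast : ℤ → F) with hB'def
    set Jm : Matrix (Fin n) (Fin n) F := Matrix.of (fun _ _ => (1:F)) with hJmdef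
    set a : F := (m : F) + α ^ 2 + (r : F) - (lam : F) with hadef
    set L : F := (lam : F) with hLdef
    have ha0 : a ≠ 0 := h2
    have ha1 : a + (n : F) * L ≠ 0 := by
      intro h; apply h1
      rw [← h, hadef, hLdef]; ring
    -- cast facts
    have hmap : ∀ (p q : ℕ) (M : Matrix (Fin p) (Fin q) ℤ),
        (Mᵀ).map (Int.cast : ℤ → F) = (M.map (Int.cast : ℤ → F))ᵀ := by
      intro p q M; exact Matrix.transpose_map
    have hcastmul : ∀ (p q : ℕ) (M : Matrix (Fin p) (Fin q) ℤ) (N : Matrix (Fin q) (Fin p) ℤ),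
        (M * N).map (Int.cast : ℤ → F)
          = M.map (Int.cast : ℤ → F) * N.map (Int.cast : ℤ → F) := by
      intro p q M N
      exact Matrix.map_mul (f := Int.castRingHom F)
    have hskewF : W'ᵀ = -W' := by
      rw [hW'def, ← Matrix.transpose_map, hskew]
      funext i j; simp
    have hWF : W' * W'ᵀ = (m : F) • (1 : Matrix (Fin n) (Fin n) F) := by
      rw [hW'def, ← Matrix.transpose_map, ← hcastmul, hW]
      funext i j
      by_cases h : i = j <;>
        simp [Matrix.map_apply, Matrix.smul_apply, Matrix.one_apply, ← Matrix.diagonal_natCast, Matrix.diagonal_apply, h]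
    have hBF : B' * B'ᵀ = ((r : F) - L) • (1 : Matrix (Fin n) (Fin n) F) + L • Jm := by
      rw [hB'def, ← Matrix.transpose_map, ← hcastmul, hB]
      funext i j
      by_cases h : i = j <;>
        simp [Matrix.map_apply, Matrix.smul_apply, Matrix.one_apply, ← Matrix.diagonal_natCast, Matrix.diagonal_apply, h, hLdef, hJmdef]
    -- compute G * Gᵀ
    have hAA : (W' + α • 1) * (W' + α • 1)ᵀ
        = ((m : F) + α ^ 2) • (1 : Matrix (Fin n) (Fin n) F) := by
      rw [Matrix.transpose_add, Matrix.transpose_smul, Matrix.transpose_one]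
      rw [Matrix.add_mul, Matrix.mul_add, Matrix.mul_add, hWF, hskewF]
      simp only [Matrix.smul_mul, Matrix.mul_smul, Matrix.one_mul, Matrix.mul_one,
        Matrix.mul_neg, smul_neg, smul_smul]
      rw [add_smul, ← sq]
      abel
    have hM : G * Gᵀ = a • (1 : Matrix (Fin n) (Fin n) F) + L • Jm := by
      rw [hG, Matrix.transpose_fromCols, Matrix.fromCols_mul_fromRows, hAA, hBF]
      rw [hadef]
      rw [← add_assoc, ← add_smul]
      congr 2
      ring
    -- the right inverse
    set c0 : F := a⁻¹ with hc0
    set d0 : F := -(L / (a * (a + (n : F) * L))) with hd0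
    have hJJ : Jm * Jm = (n : F) • Jm := by
      funext i j
      simp [hJmdef, Matrix.mul_apply, Finset.sum_const]
    have hMN : (a • (1 : Matrix (Fin n) (Fin n) F) + L • Jm) * (c0 • 1 + d0 • Jm) = 1 := by
      rw [Matrix.add_mul, Matrix.mul_add, Matrix.mul_add]
      simp only [Matrix.smul_mul, Matrix.mul_smul, Matrix.one_mul, Matrix.mul_one, hJJ,
        smul_smul]
      have e1 : c0 * a = 1 := inv_mul_cancel₀ ha0
      have e2 : d0 * a + (c0 * L + d0 * (L * (n : F))) = 0 := by
        rw [hc0, hd0, div_eq_mul_inv, mul_inv]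
        linear_combination (-(a⁻¹ * L)) * mul_inv_cancel₀ ha1
      rw [e1]
      calc (1:F) • (1 : Matrix (Fin n) (Fin n) F) + (d0 * a) • Jm + ((c0 * L) • Jm + (d0 * (L * (n:F))) • Jm)
          = 1 + (d0 * a + (c0 * L + d0 * (L * (n:F)))) • Jm := by
            simp only [one_smul, add_smul]; abel
        _ = 1 := by rw [e2, zero_smul, add_zero]
    intro c hc
    have h3 : c ᵥ* ((G * Gᵀ) * (c0 • 1 + d0 • Jm)) = 0 := by
      rw [← Matrix.vecMul_vecMul, hc, Matrix.zero_vecMul]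
    rw [hM, hMN, Matrix.vecMul_one] at h3
    exact h3
  constructor
  · rw [IsLCD, eq_bot_iff]
    intro x hx
    obtain ⟨hx1, hx2⟩ := Submodule.mem_inf.mp hx
    obtain ⟨c, hc⟩ := (Submodule.mem_span_range_iff_exists_fun F).mp hx1
    have hxv : x = c ᵥ* G := by
      rw [← hc]; funext j
      simp [Matrix.vecMul, dotProduct, Finset.sum_apply]
    have hrows : ∀ i, G i ∈ rowSpan F G := fun i =>
      Submodule.subset_span ⟨i, rfl⟩
    have hMc : c ᵥ* (G * Gᵀ) = 0 := by
      funext i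
      have h0 : x ⬝ᵥ G i = 0 := hx2 (G i) (hrows i)
      rw [hxv] at h0
      rw [Pi.zero_apply, ← h0]
      simp only [Matrix.vecMul, dotProduct, Matrix.mul_apply, Matrix.transpose_apply,
        Finset.mul_sum, Finset.sum_mul]
      rw [Finset.sum_comm]
      congr 1; funext k; congr 1; funext j; ring
    have hc0 := key c hMc
    rw [hc0] at hxv
    simp [hxv]
  · have hsum : ∀ c : Fin n → F, (∑ i, c i • G i) = c ᵥ* G := by
      intro c; funext j
      simp [Matrix.vecMul, dotProduct, Finset.sum_apply]
    have hli : LinearIndependent F fun i => G i := by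
      rw [Fintype.linearIndependent_iff]
      intro c hc
      have hvG : c ᵥ* G = 0 := by rw [← hsum]; exact hc
      have hc0 : c = 0 := by
        apply key
        have := congrArg (fun v => v ᵥ* Gᵀ) hvG
        simpa [Matrix.vecMul_vecMul] using this
      intro i; rw [hc0]; rfl
    rw [rowSpan, finrank_span_eq_card hli, Fintype.card_fin]
end

section
/- Let H be a skew type Hadamard matrix of order n, let α ∈ F_q, and let G = [H + α·I_n | I_n] over F_q. If n + (α+1)² ≠ 0 in F_q, then G generates an LCD code C of length 2n and dimension n over F_q. Moreover, if in addition n − 1 + (α+1)² ≠ 0 in F_q and β ∈ F_q satisfies β + (α+1)² + n − 1 = 0, then Ḡ = [H + α·I_n | β·I_n] generates the dual code C⊥. -/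
open Matrix BigOperators

lemma mem_dualCode' {F : Type*} [Field F] {ι : Type*} [Fintype ι] (C : Submodule F (ι → F))
    (v : ι → F) : v ∈ dualCode C ↔ ∀ c ∈ C, v ⬝ᵥ c = 0 := Iff.rfl

lemma vecMul_smul_one {F : Type*} [Field F] {n : ℕ} (c : F) (x : Fin n → F) :
    x ᵥ* (c • (1 : Matrix (Fin n) (Fin n) F)) = c • x := by
  ext j
  simp [Matrix.vecMul, dotProduct, Matrix.one_apply, mul_ite,
    Finset.sum_ite_eq, mul_comm]

lemma smul_one_mulVec {F : Type*} [Field F] {n : ℕ} (c : F) (x : Fin n → F) :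
    (c • (1 : Matrix (Fin n) (Fin n) F)) *ᵥ x = c • x := by
  ext j
  simp [Matrix.mulVec, dotProduct, Matrix.one_apply, ite_mul,
    Finset.sum_ite_eq, mul_comm, mul_assoc]

/-- If `H` is a skew type Hadamard matrix of order `n`, `α ∈ F` and
`G = [H + α·I_n | I_n]` over the finite field `F` with `n + (α+1)² ≠ 0` in `F`, then `G`
generates an LCD code `C` of length `2n` and dimension `n`; moreover if in addition
`n - 1 + (α+1)² ≠ 0` and `β + (α+1)² + n - 1 = 0` in `F`, then
`Ḡ = [H + α·I_n | β·I_n]` generates the dual code `C⊥`. -/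
theorem statement9 {F : Type*} [Field F] [Fintype F] {n : ℕ}
    (H : Matrix (Fin n) (Fin n) ℤ)
    (hHent : ∀ i j, H i j = 1 ∨ H i j = -1)
    (hH : H * Hᵀ = (n : ℤ) • (1 : Matrix (Fin n) (Fin n) ℤ))
    (hskew : H + Hᵀ = (2 : ℤ) • (1 : Matrix (Fin n) (Fin n) ℤ))
    (α β : F)
    (h1 : (n : F) + (α + 1) ^ 2 ≠ 0)
    (G Gbar : Matrix (Fin n) (Fin n ⊕ Fin n) F)
    (hG : G = Matrix.fromCols
      (H.map (Int.cast : ℤ → F) + α • (1 : Matrix (Fin n) (Fin n) F))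
      (1 : Matrix (Fin n) (Fin n) F))
    (hGbar : Gbar = Matrix.fromCols
      (H.map (Int.cast : ℤ → F) + α • (1 : Matrix (Fin n) (Fin n) F))
      (β • (1 : Matrix (Fin n) (Fin n) F))) :
    (IsLCD (rowSpan F G) ∧ Module.finrank F (rowSpan F G) = n) ∧
    ((n : F) - 1 + (α + 1) ^ 2 ≠ 0 → β + (α + 1) ^ 2 + (n : F) - 1 = 0 →
      rowSpan F Gbar = dualCode (rowSpan F G)) := by
  classical
  set Hf : Matrix (Fin n) (Fin n) F := H.map (Int.cast : ℤ → F) with hHfdef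
  set A : Matrix (Fin n) (Fin n) F := Hf + α • 1 with hAdef
  -- basic facts about Hf over F
  have hHf : Hf * Hfᵀ = (n : F) • (1 : Matrix (Fin n) (Fin n) F) := by
    have : (H * Hᵀ).map (Int.cast : ℤ → F) = Hf * Hfᵀ := by
      ext i j
      simp [Matrix.mul_apply, Matrix.map_apply, hHfdef]
    rw [← this, hH]
    ext i j
    rw [Matrix.map_apply, Matrix.smul_apply, Matrix.smul_apply, smul_eq_mul, smul_eq_mul]
    by_cases h : i = j <;> simp [Matrix.one_apply, h]
  have hskewf : Hf + Hfᵀ = (2 : F) • (1 : Matrix (Fin n) (Fin n) F) := by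
    have : (H + Hᵀ).map (Int.cast : ℤ → F) = Hf + Hfᵀ := by
      ext i j
      simp [Matrix.map_apply, hHfdef]
    rw [← this, hskew]
    ext i j
    rw [Matrix.map_apply, Matrix.smul_apply, Matrix.smul_apply, smul_eq_mul, smul_eq_mul]
    by_cases h : i = j <;> simp [Matrix.one_apply, h]
  have hAt : Aᵀ = Hfᵀ + α • 1 := by
    rw [hAdef]
    simp [Matrix.transpose_add, Matrix.transpose_smul]
  -- A * Aᵀ = (n - 1 + (α+1)²) • 1
  have keyA : A * Aᵀ = ((n : F) - 1 + (α + 1) ^ 2) • (1 : Matrix (Fin n) (Fin n) F) := by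
    have expand : A * Aᵀ = Hf * Hfᵀ + α • (Hf + Hfᵀ) + (α * α) • 1 := by
      rw [hAdef, hAt]
      simp only [Matrix.add_mul, Matrix.mul_add, Matrix.smul_mul, Matrix.mul_smul,
        Matrix.one_mul, Matrix.mul_one, smul_smul, smul_add]
      abel
    rw [expand, hHf, hskewf, smul_smul, ← add_smul, ← add_smul]
    congr 1
    ring
  -- G * Gᵀ = (n + (α+1)²) • 1
  have keyG : G * Gᵀ = ((n : F) + (α + 1) ^ 2) • (1 : Matrix (Fin n) (Fin n) F) := by
    rw [hG, Matrix.transpose_fromCols, Matrix.transpose_one,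
      Matrix.fromCols_mul_fromRows, keyA, Matrix.one_mul]
    nth_rewrite 2 [show (1 : Matrix (Fin n) (Fin n) F) = (1 : F) • 1 by simp]
    rw [← add_smul]
    congr 1
    ring
  -- key vector identity
  have fact1 : ∀ x : Fin n → F, G *ᵥ (x ᵥ* G) = ((n : F) + (α + 1) ^ 2) • x := by
    intro x
    rw [← Matrix.vecMul_transpose, Matrix.vecMul_vecMul, keyG, vecMul_smul_one]
  -- any element of the dual code is killed by G
  have hdual0 : ∀ v : (Fin n ⊕ Fin n) → F, v ∈ dualCode (rowSpan F G) → G *ᵥ v = 0 := by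
    intro v hv
    ext i
    have hrow : G i ∈ rowSpan F G := Submodule.subset_span ⟨i, rfl⟩
    have h0 : v ⬝ᵥ G i = 0 := hv (G i) hrow
    simpa [Matrix.mulVec, dotProduct_comm] using h0
  have hrs : rowSpan F G = LinearMap.range G.vecMulLinear := (range_vecMulLinear G).symm
  have hrsbar : rowSpan F Gbar = LinearMap.range Gbar.vecMulLinear :=
    (range_vecMulLinear Gbar).symm
  refine ⟨⟨?_, ?_⟩, ?_⟩
  · -- LCD
    rw [IsLCD, Submodule.eq_bot_iff]
    intro v hv
    obtain ⟨hv1, hv2⟩ := Submodule.mem_inf.mp hv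
    rw [hrs] at hv1
    obtain ⟨x, hx⟩ := hv1
    rw [Matrix.vecMulLinear_apply] at hx
    have h0 : G *ᵥ v = 0 := hdual0 v hv2
    rw [← hx, fact1] at h0
    have hx0 : x = 0 := by
      rcases smul_eq_zero.mp h0 with h | h
      · exact absurd h h1
      · exact h
    rw [← hx, hx0, Matrix.zero_vecMul]
  · -- dimension
    have hinj : Function.Injective G.vecMulLinear := by
      rw [← LinearMap.ker_eq_bot, Submodule.eq_bot_iff]
      intro x hx
      have hx' : x ᵥ* G = 0 := by
        simpa [Matrix.vecMulLinear_apply] using hx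
      have h0 : ((n : F) + (α + 1) ^ 2) • x = 0 := by
        rw [← fact1, hx', Matrix.mulVec_zero]
      rcases smul_eq_zero.mp h0 with h | h
      · exact absurd h h1
      · exact h
    rw [hrs, LinearMap.finrank_range_of_inj hinj, Module.finrank_fin_fun]
  · -- dual code description
    intro h2 hβ
    have hβ' : β = -((n : F) - 1 + (α + 1) ^ 2) := by linear_combination hβ
    have hβ0 : β ≠ 0 := by
      rw [hβ']
      exact neg_ne_zero.mpr h2
    -- G * Gbarᵀ = 0
    have hGbart : Gbarᵀ = Matrix.fromRows Aᵀ (β • (1 : Matrix (Fin n) (Fin n) F)) := by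
      rw [hGbar, Matrix.transpose_fromCols, Matrix.transpose_smul, Matrix.transpose_one]
    have keyGGbar : G * Gbarᵀ = 0 := by
      rw [hG, hGbart, Matrix.fromCols_mul_fromRows, keyA, Matrix.one_mul, hβ', ← add_smul,
        show ((n : F) - 1 + (α + 1) ^ 2) + -((n : F) - 1 + (α + 1) ^ 2) = 0 by ring, zero_smul]
    -- Aᵀ * A = (n - 1 + (α+1)²) • 1
    have hAinv : A * (((n : F) - 1 + (α + 1) ^ 2)⁻¹ • Aᵀ) = 1 := by
      rw [Matrix.mul_smul, keyA, smul_smul, inv_mul_cancel₀ h2, one_smul]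
    have hAtA : Aᵀ * A = ((n : F) - 1 + (α + 1) ^ 2) • (1 : Matrix (Fin n) (Fin n) F) := by
      have h := mul_eq_one_comm.mp hAinv
      calc Aᵀ * A = (((n : F) - 1 + (α + 1) ^ 2) • (((n : F) - 1 + (α + 1) ^ 2)⁻¹ • Aᵀ)) * A := by
            rw [smul_smul, mul_inv_cancel₀ h2, one_smul]
        _ = ((n : F) - 1 + (α + 1) ^ 2) • ((((n : F) - 1 + (α + 1) ^ 2)⁻¹ • Aᵀ) * A) := by
            rw [Matrix.smul_mul]
        _ = ((n : F) - 1 + (α + 1) ^ 2) • 1 := by rw [h]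
    apply le_antisymm
    · -- rowSpan Gbar ⊆ dual
      intro w hw
      rw [hrsbar] at hw
      obtain ⟨x, hx⟩ := hw
      rw [Matrix.vecMulLinear_apply] at hx
      rw [mem_dualCode']
      intro c hc
      rw [hrs] at hc
      obtain ⟨y, hy⟩ := hc
      rw [Matrix.vecMulLinear_apply] at hy
      have hz : Gbar *ᵥ c = 0 := by
        rw [← hy, ← Matrix.vecMul_transpose, Matrix.vecMul_vecMul, keyGGbar, Matrix.vecMul_zero]
      rw [← hx, ← Matrix.dotProduct_mulVec, hz, dotProduct_zero]
    · -- dual ⊆ rowSpan Gbar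
      intro v hv
      have h0 : G *ᵥ v = 0 := hdual0 v hv
      set v₁ : Fin n → F := v ∘ Sum.inl with hv1
      set v₂ : Fin n → F := v ∘ Sum.inr with hv2
      have hvsplit : Sum.elim v₁ v₂ = v := Sum.elim_comp_inl_inr v
      have hAv : A *ᵥ v₁ + v₂ = 0 := by
        have : G *ᵥ Sum.elim v₁ v₂ = 0 := by rw [hvsplit]; exact h0
        rw [hG, Matrix.fromCols_mulVec_sumElim, Matrix.one_mulVec] at this
        exact this
      have hv2' : v₂ = -(A *ᵥ v₁) := by
        rw [← neg_eq_of_add_eq_zero_left hAv, neg_neg]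
      have hfirst : (β⁻¹ • v₂) ᵥ* A = v₁ := by
        rw [← Matrix.transpose_transpose A, Matrix.vecMul_transpose]
        rw [Matrix.mulVec_smul]
        nth_rewrite 1 [hv2']
        rw [Matrix.mulVec_neg, Matrix.mulVec_mulVec, hAtA, smul_one_mulVec, hβ']
        rw [← neg_smul, smul_smul,
          show (-((n : F) - 1 + (α + 1) ^ 2))⁻¹ * -((n : F) - 1 + (α + 1) ^ 2) = 1 by
            rw [inv_mul_cancel₀ (neg_ne_zero.mpr h2)], one_smul]
      have hsecond : (β⁻¹ • v₂) ᵥ* (β • (1 : Matrix (Fin n) (Fin n) F)) = v₂ := by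
        rw [vecMul_smul_one, smul_smul, mul_inv_cancel₀ hβ0, one_smul]
      rw [hrsbar]
      refine ⟨β⁻¹ • v₂, ?_⟩
      rw [Matrix.vecMulLinear_apply, hGbar, Matrix.vecMul_fromCols, hfirst, hsecond, hvsplit]
end

section
/- Let M be a nonsingular n×n matrix over a field F, let N = (M⁻¹)ᵀ, and let G be a group of permutation automorphisms of M, with row orbits R_1,…,R_t and column orbits C_1,…,C_{t′}. Fix row indices x ∈ R_i and x′ ∈ R_s, and for each j fix a column index y_j ∈ C_j. Then Σ_{j=1}^{t′} (Σ_{z∈C_j} M_{x,z})·(Σ_{w∈R_s} N_{w,y_j}) equals 1 if i = s and equals 0 otherwise. -/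
open Matrix BigOperators

/-- `(σ, τ)` is a permutation automorphism of the square matrix `M` if permuting the rows
by `σ` and the columns by `τ` leaves `M` unchanged, i.e. `M (σ i) (τ j) = M i j`. -/
def IsPermAut {n : ℕ} {R : Type*} (M : Matrix (Fin n) (Fin n) R)
    (g : Equiv.Perm (Fin n) × Equiv.Perm (Fin n)) : Prop :=
  ∀ i j, M (g.1 i) (g.2 j) = M i j

/-- Let `M` be a nonsingular `n × n` matrix over a field `F`, let
`N = (M⁻¹)ᵀ`, and let `G` be a group of permutation automorphisms of `M` with row orbits
`R_1, …, R_t` and column orbits `C_1, …, C_{t'}`.  For `x ∈ R i`, `x' ∈ R s` and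
representatives `y j ∈ C j`, we have
`Σ_j (Σ_{z ∈ C j} M x z)·(Σ_{w ∈ R s} N w (y j)) = δ_{i s}`. -/
theorem statement12 {F : Type*} [Field F] {n t t' : ℕ}
    (M : Matrix (Fin n) (Fin n) F) (hM : IsUnit M.det)
    (G : Subgroup (Equiv.Perm (Fin n) × Equiv.Perm (Fin n)))
    (hG : ∀ g ∈ G, IsPermAut M g)
    (R : Fin t → Finset (Fin n))
    (hRorb : ∀ i, ∀ x ∈ R i, ∀ w, w ∈ R i ↔ ∃ g ∈ G, g.1 x = w)
    (hRpart : ∀ x : Fin n, ∃! i, x ∈ R i)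
    (C : Fin t' → Finset (Fin n))
    (hCorb : ∀ j, ∀ y ∈ C j, ∀ z, z ∈ C j ↔ ∃ g ∈ G, g.2 y = z)
    (hCpart : ∀ y : Fin n, ∃! j, y ∈ C j)
    (i s : Fin t) (x x' : Fin n) (hx : x ∈ R i) (hx' : x' ∈ R s)
    (y : Fin t' → Fin n) (hy : ∀ j, y j ∈ C j) :
    ∑ j, (∑ z ∈ C j, M x z) * (∑ w ∈ R s, (M⁻¹)ᵀ w (y j)) =
      if i = s then 1 else 0 := by
  classical
  -- invariance of `M⁻¹` under `G`
  have hN : ∀ g ∈ G, ∀ a b, M⁻¹ (g.2 a) (g.1 b) = M⁻¹ a b := by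
    intro g hg a b
    have hsub : M.submatrix g.1 g.2 = M := by
      ext i j; exact hG g hg i j
    have h2 := Matrix.inv_submatrix_equiv M g.1 g.2
    rw [hsub] at h2
    conv_rhs => rw [h2]
    rw [Matrix.submatrix_apply]
  -- `R s` is closed under `G`
  have hRclosed : ∀ g ∈ G, ∀ w ∈ R s, g.1 w ∈ R s := by
    intro g hg w hw
    obtain ⟨h, hh, hhx⟩ := (hRorb s x' hx' w).mp hw
    exact (hRorb s x' hx' (g.1 w)).mpr ⟨g * h, G.mul_mem hg hh, by
      simp [Prod.fst_mul, Equiv.Perm.mul_apply, hhx]⟩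
  -- the image of `R s` under `g.1` is `R s`
  have hRimg : ∀ g ∈ G, (R s).image g.1 = R s := by
    intro g hg
    apply Finset.eq_of_subset_of_card_le
    · intro w hw
      obtain ⟨v, hv, rfl⟩ := Finset.mem_image.mp hw
      exact hRclosed g hg v hv
    · rw [Finset.card_image_of_injective _ g.1.injective]
  -- reindexing sums over `R s` by `g.1`
  have hreidx : ∀ g ∈ G, ∀ f : Fin n → F,
      (∑ w ∈ R s, f (g.1 w)) = ∑ w ∈ R s, f w := by
    intro g hg f
    rw [← Finset.sum_image (fun a _ b _ h => g.1.injective h), hRimg g hg]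
  -- the inner sum only depends on the orbit of the column index
  have hconst : ∀ j, ∀ z ∈ C j,
      (∑ w ∈ R s, M⁻¹ (y j) w) = ∑ w ∈ R s, M⁻¹ z w := by
    intro j z hz
    obtain ⟨g, hg, rfl⟩ := (hCorb j (y j) (hy j) z).mp hz
    calc ∑ w ∈ R s, M⁻¹ (y j) w
        = ∑ w ∈ R s, M⁻¹ (g.2 (y j)) (g.1 w) := by
          refine Finset.sum_congr rfl fun w _ => ?_
          rw [hN g hg]
      _ = ∑ w ∈ R s, M⁻¹ (g.2 (y j)) w := hreidx g hg _
  -- disjointness of the column orbits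
  have hdisj : ((Finset.univ : Finset (Fin t')) : Set (Fin t')).PairwiseDisjoint C := by
    intro j₁ _ j₂ _ hne
    refine Finset.disjoint_left.mpr fun z hz₁ hz₂ => hne ?_
    obtain ⟨j₀, _, huniq⟩ := hCpart z
    rw [huniq j₁ hz₁, huniq j₂ hz₂]
  have hcover : Finset.univ.biUnion C = (Finset.univ : Finset (Fin n)) := by
    refine Finset.eq_univ_of_forall fun z => ?_
    obtain ⟨j₀, hj₀, _⟩ := hCpart z
    exact Finset.mem_biUnion.mpr ⟨j₀, Finset.mem_univ _, hj₀⟩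
  have key : ∑ j, (∑ z ∈ C j, M x z) * (∑ w ∈ R s, (M⁻¹)ᵀ w (y j))
      = ∑ w ∈ R s, (M * M⁻¹) x w := by
    calc ∑ j, (∑ z ∈ C j, M x z) * (∑ w ∈ R s, (M⁻¹)ᵀ w (y j))
        = ∑ j, ∑ z ∈ C j, M x z * ∑ w ∈ R s, M⁻¹ z w := by
          refine Finset.sum_congr rfl fun j _ => ?_
          rw [Finset.sum_mul]
          refine Finset.sum_congr rfl fun z hz => ?_
          simp only [Matrix.transpose_apply]
          rw [show (∑ w ∈ R s, M⁻¹ (y j) w) = ∑ w ∈ R s, M⁻¹ z w from hconst j z hz]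
      _ = ∑ z : Fin n, M x z * ∑ w ∈ R s, M⁻¹ z w := by
          rw [← hcover, Finset.sum_biUnion hdisj]
      _ = ∑ w ∈ R s, (M * M⁻¹) x w := by
          simp only [Finset.mul_sum]
          rw [Finset.sum_comm]
          refine Finset.sum_congr rfl fun w _ => ?_
          rw [Matrix.mul_apply]
  rw [key, Matrix.mul_nonsing_inv M hM]
  simp only [Matrix.one_apply]
  rw [Finset.sum_ite_eq (R s) x (fun _ => (1 : F))]
  obtain ⟨j₀, hj₀, huniq⟩ := hRpart x
  by_cases his : i = s
  · subst his
    simp [hx]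
  · have hxs : x ∉ R s := fun hxs => his ((huniq i hx).trans (huniq s hxs).symm)
    simp [hxs, his]
end

section
/- Let M be a nonsingular n×n matrix over a field F, let N = (M⁻¹)ᵀ, and let G be a group of permutation automorphisms of M whose number t of row orbits equals its number of column orbits. Let R = [Γ_{ij}] be the t×t row orbit matrix of M with respect to G, and let C = [γ_{ij}] be the t×t column orbit matrix of N with respect to G (using the same orderings of the row orbits and of the column orbits). Then R is nonsingular and R⁻¹ = Cᵀ. -/
open Matrix BigOperators

/-- Let `M` be a nonsingular `n × n` matrix over a field `F`, let
`N = (M⁻¹)ᵀ`, and let `G` be a group of permutation automorphisms of `M` with `t` row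
orbits `R_1, …, R_t` and `t` column orbits `C_1, …, C_t`.  If `Rmat` is the row orbit
matrix of `M` and `Cmat` is the column orbit matrix of `N` (with the same orderings of
the orbits), then `Rmat` is nonsingular and `Rmat⁻¹ = Cmatᵀ`. -/
theorem statement13 {F : Type*} [Field F] {n t : ℕ}
    (M : Matrix (Fin n) (Fin n) F) (hM : IsUnit M.det)
    (G : Subgroup (Equiv.Perm (Fin n) × Equiv.Perm (Fin n)))
    (hG : ∀ g ∈ G, IsPermAut M g)
    (R : Fin t → Finset (Fin n))
    (hRorb : ∀ i, ∀ x ∈ R i, ∀ w, w ∈ R i ↔ ∃ g ∈ G, g.1 x = w)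
    (hRpart : ∀ x : Fin n, ∃! i, x ∈ R i)
    (C : Fin t → Finset (Fin n))
    (hCorb : ∀ j, ∀ y ∈ C j, ∀ z, z ∈ C j ↔ ∃ g ∈ G, g.2 y = z)
    (hCpart : ∀ y : Fin n, ∃! j, y ∈ C j)
    (ρ : Fin t → Fin n) (hρ : ∀ i, ρ i ∈ R i)
    (κ : Fin t → Fin n) (hκ : ∀ j, κ j ∈ C j)
    (Rmat Cmat : Matrix (Fin t) (Fin t) F)
    (hRmat : Rmat = Matrix.of fun i j => ∑ z ∈ C j, M (ρ i) z)
    (hCmat : Cmat = Matrix.of fun i j => ∑ w ∈ R i, (M⁻¹)ᵀ w (κ j)) :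
    IsUnit Rmat.det ∧ Rmat⁻¹ = Cmatᵀ := by
  -- `G` acts as permutation automorphisms of `M⁻¹` transposed indices
  have hN : ∀ g ∈ G, ∀ w z : Fin n, M⁻¹ (g.2 z) (g.1 w) = M⁻¹ z w := by
    intro g hg w z
    have h1 : M.submatrix g.1 g.2 = M := by
      ext i j; exact hG g hg i j
    have h2 : M⁻¹.submatrix (g.2 : Equiv.Perm (Fin n)) (g.1 : Equiv.Perm (Fin n)) = M⁻¹ := by
      conv_rhs => rw [← h1]
      rw [Matrix.inv_submatrix_equiv]
    calc M⁻¹ (g.2 z) (g.1 w)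
        = M⁻¹.submatrix (g.2 : Equiv.Perm (Fin n)) (g.1 : Equiv.Perm (Fin n)) z w := rfl
      _ = M⁻¹ z w := by rw [h2]
  -- row orbits are closed under the action of `G`
  have hRclosed : ∀ h ∈ G, ∀ k, ∀ w ∈ R k, h.1 w ∈ R k := by
    intro h hh k w hw
    obtain ⟨g, hg, hgw⟩ := (hRorb k (ρ k) (hρ k) w).1 hw
    refine (hRorb k (ρ k) (hρ k) (h.1 w)).2 ⟨h * g, mul_mem hh hg, ?_⟩
    simp [Prod.fst_mul, Equiv.Perm.mul_apply, hgw]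
  -- the column sum of `N` over a row orbit is independent of the representative
  have hSinv : ∀ k j, ∀ z ∈ C j,
      (∑ w ∈ R k, M⁻¹ z w) = ∑ w ∈ R k, M⁻¹ (κ j) w := by
    intro k j z hz
    obtain ⟨g, hg, hgz⟩ := (hCorb j (κ j) (hκ j) z).1 hz
    subst hgz
    refine Finset.sum_bij' (fun w _ => g.1⁻¹ w) (fun w _ => g.1 w)
      (fun w hw => hRclosed g⁻¹ (inv_mem hg) k w hw)
      (fun w hw => hRclosed g hg k w hw) (by simp) (by simp) ?_
    intro w hw
    have := hN g hg (g.1⁻¹ w) (κ j)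
    simpa using this
  -- summing over all columns equals summing orbit-by-orbit
  have huniv : (Finset.univ : Finset (Fin n)) = Finset.univ.biUnion C := by
    ext z
    simp only [Finset.mem_univ, Finset.mem_biUnion, true_iff, true_and]
    exact (hCpart z).exists
  have hdisj : ((Finset.univ : Finset (Fin t)) : Set (Fin t)).PairwiseDisjoint C := by
    intro j₁ _ j₂ _ hne
    refine Finset.disjoint_left.2 fun z hz1 hz2 => ?_
    exact hne ((hCpart z).unique hz1 hz2)
  -- main computation : Rmat * Cmatᵀ = 1
  have key : Rmat * Cmatᵀ = 1 := by
    ext i k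
    rw [Matrix.mul_apply, hRmat, hCmat]
    simp only [Matrix.of_apply, Matrix.transpose_apply]
    have step1 : ∀ j : Fin t,
        (∑ z ∈ C j, M (ρ i) z) * (∑ w ∈ R k, M⁻¹ (κ j) w)
          = ∑ z ∈ C j, M (ρ i) z * ∑ w ∈ R k, M⁻¹ z w := by
      intro j
      rw [Finset.sum_mul]
      exact Finset.sum_congr rfl fun z hz => by rw [hSinv k j z hz]
    calc (∑ j, (∑ z ∈ C j, M (ρ i) z) * ∑ w ∈ R k, (M⁻¹)ᵀ w (κ j))
        = ∑ j, ∑ z ∈ C j, M (ρ i) z * ∑ w ∈ R k, M⁻¹ z w := by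
          refine Finset.sum_congr rfl fun j _ => ?_
          simp only [Matrix.transpose_apply]
          exact step1 j
      _ = ∑ z, M (ρ i) z * ∑ w ∈ R k, M⁻¹ z w := by
          rw [huniv, Finset.sum_biUnion hdisj]
      _ = ∑ w ∈ R k, ∑ z, M (ρ i) z * M⁻¹ z w := by
          rw [Finset.sum_comm]
          exact Finset.sum_congr rfl fun z _ => Finset.mul_sum _ _ _
      _ = ∑ w ∈ R k, (M * M⁻¹) (ρ i) w := by
          exact Finset.sum_congr rfl fun w _ => (Matrix.mul_apply).symm
      _ = ∑ w ∈ R k, (1 : Matrix (Fin n) (Fin n) F) (ρ i) w := by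
          rw [Matrix.mul_nonsing_inv M hM]
      _ = (1 : Matrix (Fin t) (Fin t) F) i k := by
          simp only [Matrix.one_apply]
          rw [Finset.sum_ite_eq]
          by_cases hik : i = k
          · subst hik
            simp [hρ i]
          · have : ρ i ∉ R k := fun hmem => hik ((hRpart (ρ i)).unique (hρ i) hmem)
            simp [this, hik]
  exact ⟨Matrix.isUnit_det_of_right_inverse key, Matrix.inv_eq_right_inv key⟩
end

section
/- Let W be a weighing matrix W(n,m) and let G be a group of permutation automorphisms of W, with row orbits R_1,…,R_t of sizes Ω_1,…,Ω_t and column orbits C_1,…,C_t of sizes ω_1,…,ω_t, and let Γ_{ij} = Σ_{z∈C_j} W_{x,z} for a representative x ∈ R_i (taking values in ℤ). Then for all i, s: Σ_{j=1}^{t} (Ω_s/ω_j)·Γ_{ij}·Γ_{sj} = m if i = s and = 0 otherwise, as an identity in ℚ. -/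
open Matrix BigOperators

/-- Let `W` be a weighing matrix `W(n,m)` with a group `G` of
permutation automorphisms having row orbits `R_1, …, R_t` (of sizes `Ω_i`) and column
orbits `C_1, …, C_t` (of sizes `ω_j`), and let `Γ_{ij} = Σ_{z ∈ C j} W (ρ i) z ∈ ℤ` for
representatives `ρ i ∈ R i`.  Then `Σ_j (Ω_s/ω_j)·Γ_{ij}·Γ_{sj} = δ_{is}·m` in `ℚ`. -/
theorem statement14 {n m t : ℕ}
    (W : Matrix (Fin n) (Fin n) ℤ)
    (hWent : ∀ i j, W i j = 0 ∨ W i j = 1 ∨ W i j = -1)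
    (hW : W * Wᵀ = (m : ℤ) • (1 : Matrix (Fin n) (Fin n) ℤ))
    (G : Subgroup (Equiv.Perm (Fin n) × Equiv.Perm (Fin n)))
    (hG : ∀ g ∈ G, IsPermAut W g)
    (R : Fin t → Finset (Fin n))
    (hRorb : ∀ i, ∀ x ∈ R i, ∀ w, w ∈ R i ↔ ∃ g ∈ G, g.1 x = w)
    (hRpart : ∀ x : Fin n, ∃! i, x ∈ R i)
    (C : Fin t → Finset (Fin n))
    (hCorb : ∀ j, ∀ y ∈ C j, ∀ z, z ∈ C j ↔ ∃ g ∈ G, g.2 y = z)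
    (hCpart : ∀ y : Fin n, ∃! j, y ∈ C j)
    (ρ : Fin t → Fin n) (hρ : ∀ i, ρ i ∈ R i)
    (i s : Fin t) :
    ∑ j, ((R s).card : ℚ) / ((C j).card : ℚ) *
        ((∑ z ∈ C j, W (ρ i) z : ℤ) : ℚ) * ((∑ z ∈ C j, W (ρ s) z : ℤ) : ℚ) =
      if i = s then (m : ℚ) else 0 := by
  classical
  -- stability of orbits
  have hstabR : ∀ k g, g ∈ G → ∀ y : Fin n, y ∈ R k ↔ g.1 y ∈ R k := by
    intro k g hg y
    constructor
    · intro hy; exact (hRorb k y hy _).mpr ⟨g, hg, rfl⟩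
    · intro hy
      have := (hRorb k (g.1 y) hy y).mpr ⟨g⁻¹, inv_mem hg, by simp⟩
      exact this
  have hstabC : ∀ k g, g ∈ G → ∀ z : Fin n, z ∈ C k ↔ g.2 z ∈ C k := by
    intro k g hg z
    constructor
    · intro hz; exact (hCorb k z hz _).mpr ⟨g, hg, rfl⟩
    · intro hz
      have := (hCorb k (g.2 z) hz z).mpr ⟨g⁻¹, inv_mem hg, by simp⟩
      exact this
  -- row sums over a column orbit are constant on a row orbit
  have hGammaConst : ∀ j k, ∀ x ∈ R k, ∀ x' ∈ R k,
      ∑ z ∈ C j, W x z = ∑ z ∈ C j, W x' z := by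
    intro j k x hx x' hx'
    obtain ⟨g, hg, hgx⟩ := (hRorb k x hx x').mp hx'
    have key : ∀ z, W x' z = W x ((g⁻¹).2 z) := by
      intro z
      have h1 := hG g⁻¹ (inv_mem hg) (g.1 x) z
      rw [← hgx]
      simpa using h1.symm
    symm
    calc ∑ z ∈ C j, W x' z = ∑ z ∈ C j, W x ((g⁻¹).2 z) :=
          Finset.sum_congr rfl (fun z _ => key z)
      _ = ∑ z ∈ C j, W x z :=
          Finset.sum_equiv ((g⁻¹).2) (fun z => hstabC j g⁻¹ (inv_mem hg) z)
            (fun z _ => rfl)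
  -- column sums over a row orbit are constant on a column orbit
  have hColConst : ∀ j k, ∀ z ∈ C j, ∀ z' ∈ C j,
      ∑ y ∈ R k, W y z = ∑ y ∈ R k, W y z' := by
    intro j k z hz z' hz'
    obtain ⟨g, hg, hgz⟩ := (hCorb j z hz z').mp hz'
    have key : ∀ y, W y z' = W ((g⁻¹).1 y) z := by
      intro y
      have h1 := hG g hg ((g⁻¹).1 y) z
      rw [← hgz]
      simpa using h1
    symm
    calc ∑ y ∈ R k, W y z' = ∑ y ∈ R k, W ((g⁻¹).1 y) z :=
          Finset.sum_congr rfl (fun y _ => key y)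
      _ = ∑ y ∈ R k, W y z :=
          Finset.sum_equiv ((g⁻¹).1) (fun y => hstabR k g⁻¹ (inv_mem hg) y)
            (fun y _ => rfl)
  -- the column orbits partition the column index set
  have hdisj : ((Finset.univ : Finset (Fin t)) : Set (Fin t)).PairwiseDisjoint C := by
    intro a _ b _ hab
    rw [Function.onFun, Finset.disjoint_left]
    intro z hza hzb
    obtain ⟨u, _, huniq⟩ := hCpart z
    exact hab ((huniq a hza).trans (huniq b hzb).symm)
  have hcover : Finset.univ.biUnion C = (Finset.univ : Finset (Fin n)) := by
    ext z
    simp only [Finset.mem_biUnion, Finset.mem_univ, true_and, iff_true]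
    obtain ⟨u, hu, _⟩ := hCpart z
    exact ⟨u, hu⟩
  have hpart : ∀ (f : Fin n → ℤ), ∑ z, f z = ∑ j, ∑ z ∈ C j, f z := by
    intro f
    rw [← hcover, Finset.sum_biUnion hdisj]
  -- membership of representatives
  have hmem : ∀ k k', ρ k ∈ R k' ↔ k = k' := by
    intro k k'
    constructor
    · intro h
      obtain ⟨u, _, huniq⟩ := hRpart (ρ k)
      exact (huniq k (hρ k)).trans (huniq k' h).symm
    · rintro rfl; exact hρ k
  set T : Fin t → ℤ := fun j => ∑ z ∈ C j, W (ρ i) z * (∑ y ∈ R s, W y z) with hT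
  have hS : ∑ j, T j = (if i = s then (m : ℤ) else 0) := by
    have h1 : ∑ j, T j = ∑ z, W (ρ i) z * (∑ y ∈ R s, W y z) := (hpart _).symm
    rw [h1]
    have h2 : ∀ z, W (ρ i) z * ∑ y ∈ R s, W y z = ∑ y ∈ R s, W (ρ i) z * W y z :=
      fun z => Finset.mul_sum _ _ _
    simp_rw [h2]
    rw [Finset.sum_comm]
    have h3 : ∀ y, (∑ z, W (ρ i) z * W y z) = if ρ i = y then (m : ℤ) else 0 := by
      intro y
      have h := congrFun (congrFun hW (ρ i)) y
      rw [Matrix.mul_apply] at h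
      simp only [Matrix.transpose_apply, Matrix.smul_apply, Matrix.one_apply,
        smul_eq_mul, mul_ite, mul_one, mul_zero] at h
      exact h
    simp_rw [h3]
    rw [Finset.sum_ite_eq]
    simp [hmem i s]
  have hterm : ∀ j, ((R s).card : ℚ) / ((C j).card : ℚ) *
      ((∑ z ∈ C j, W (ρ i) z : ℤ) : ℚ) * ((∑ z ∈ C j, W (ρ s) z : ℤ) : ℚ)
      = (T j : ℚ) := by
    intro j
    rcases (C j).eq_empty_or_nonempty with he | ⟨z0, hz0⟩
    · simp [hT, he]
    · have hA : ∀ z ∈ C j, (∑ y ∈ R s, W y z) = ∑ y ∈ R s, W y z0 :=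
        fun z hz => hColConst j s z hz z0 hz0
      have hTj : T j = (∑ z ∈ C j, W (ρ i) z) * (∑ y ∈ R s, W y z0) := by
        show (∑ z ∈ C j, W (ρ i) z * (∑ y ∈ R s, W y z)) = _
        rw [Finset.sum_congr rfl (fun z hz => by rw [hA z hz] :
          ∀ z ∈ C j, W (ρ i) z * (∑ y ∈ R s, W y z)
            = W (ρ i) z * (∑ y ∈ R s, W y z0)), ← Finset.sum_mul]
      have hω : ((C j).card : ℤ) * (∑ y ∈ R s, W y z0)
          = ((R s).card : ℤ) * (∑ z ∈ C j, W (ρ s) z) := by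
        have h1 : ∑ z ∈ C j, (∑ y ∈ R s, W y z) = ((C j).card : ℤ) * (∑ y ∈ R s, W y z0) := by
          rw [Finset.sum_congr rfl hA, Finset.sum_const, nsmul_eq_mul]
        have h2 : ∑ z ∈ C j, (∑ y ∈ R s, W y z)
            = ((R s).card : ℤ) * (∑ z ∈ C j, W (ρ s) z) := by
          rw [Finset.sum_comm]
          have h3 : ∀ y ∈ R s, ∑ z ∈ C j, W y z = ∑ z ∈ C j, W (ρ s) z :=
            fun y hy => hGammaConst j s y hy (ρ s) (hρ s)
          rw [Finset.sum_congr rfl h3, Finset.sum_const, nsmul_eq_mul]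
        rw [← h1, h2]
      have hcne : ((C j).card : ℚ) ≠ 0 := by
        exact_mod_cast (Finset.card_pos.mpr ⟨z0, hz0⟩).ne'
      have hωQ : ((C j).card : ℚ) * ((∑ y ∈ R s, W y z0 : ℤ) : ℚ)
          = ((R s).card : ℚ) * ((∑ z ∈ C j, W (ρ s) z : ℤ) : ℚ) := by
        exact_mod_cast hω
      rw [hTj, div_mul_eq_mul_div, div_mul_eq_mul_div, div_eq_iff hcne]
      push_cast at hωQ ⊢
      linear_combination -(∑ z ∈ C j, ((W (ρ i) z : ℤ) : ℚ)) * hωQ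
  calc ∑ j, ((R s).card : ℚ) / ((C j).card : ℚ) *
        ((∑ z ∈ C j, W (ρ i) z : ℤ) : ℚ) * ((∑ z ∈ C j, W (ρ s) z : ℤ) : ℚ)
      = ∑ j, (T j : ℚ) := Finset.sum_congr rfl (fun j _ => hterm j)
    _ = ((∑ j, T j : ℤ) : ℚ) := by push_cast; ring
    _ = if i = s then (m : ℚ) else 0 := by rw [hS]; split <;> simp
end

section
/- Let W be an F_4-weighing matrix W(n,m;F_4) and let G be a group of permutation automorphisms of W acting with t row orbits and t column orbits, all of the same length. Let R be the t×t row orbit matrix of W with respect to G (entries computed in F_4), and let B be a t×b point-by-block incidence matrix of an (r,λ)-design on t points, with entries interpreted in F_4. If (r + (t−1)λ + m) ≠ 0 and (r − λ + m) ≠ 0 in F_4, then A = [R|B] generates a Hermitian LCD code C of length t+b over F_4, i.e., C ∩ C^H = {0}. -/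
open Matrix BigOperators

private lemma st15_perm_sum {gam M : Type*} [DecidableEq gam] [AddCommMonoid M]
    (e : Equiv.Perm gam) (s : Finset gam) (hs : ∀ y ∈ s, e y ∈ s) (f : gam → M) :
    ∑ y ∈ s, f (e y) = ∑ y ∈ s, f y := by
  have himg : s.image e = s :=
    Finset.eq_of_subset_of_card_le
      (fun z hz => by
        obtain ⟨y, hy, rfl⟩ := Finset.mem_image.mp hz
        exact hs y hy)
      (le_of_eq (Finset.card_image_of_injective s e.injective).symm)
  calc ∑ y ∈ s, f (e y) = ∑ z ∈ s.image e, f z :=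
        (Finset.sum_image (fun a _ b _ h => e.injective h)).symm
    _ = ∑ y ∈ s, f y := by rw [himg]

private lemma st15_sum_by_value {gam F M : Type*} [DecidableEq gam] [Fintype F] [DecidableEq F]
    [AddCommMonoid M] (s : Finset gam) (h : gam → F) (f : F → M) :
    ∑ y ∈ s, f (h y) = ∑ α : F, (∑ y ∈ s, if h y = α then 1 else 0 : ℕ) • f α := by
  have key : ∀ α : F, (∑ y ∈ s, if h y = α then 1 else 0 : ℕ) • f α
      = ∑ y ∈ s, (if h y = α then f α else 0) := by
    intro α
    rw [Finset.sum_smul]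
    refine Finset.sum_congr rfl fun y _ => ?_
    split <;> simp
  simp_rw [key]
  rw [Finset.sum_comm]
  refine Finset.sum_congr rfl fun y _ => ?_
  simp

/-- Let `W` be an `F₄`-weighing matrix `W(n,m;F₄)` (each row and column
has exactly `m` nonzero entries and `W·W* = m·I` where `*` is conjugate transposition,
conjugation being the Frobenius `x ↦ x²`), and let `G` be a group of permutation
automorphisms of `W` acting with `t` row orbits and `t` column orbits, all of the same
length.  Let `R` be the `t × t` row orbit matrix of `W` and `B` the `t × b` incidence
matrix of an `(r,λ)`-design on `t` points.  If `r + (t-1)λ + m ≠ 0` and `r - λ + m ≠ 0`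
in `F₄`, then `A = [R | B]` generates a Hermitian LCD code `C` of length `t + b`, i.e.
`C ∩ C^H = {0}` where `C^H = {v | Σ_k u_k·v_k² = 0 for all u ∈ C}`. -/
theorem statement15 {F : Type*} [Field F] [Fintype F] [DecidableEq F]
    (hF : Fintype.card F = 4)
    {n m t b r lam l : ℕ} (hr : 0 < r) (hlam : 0 < lam)
    (W : Matrix (Fin n) (Fin n) F)
    (hWrow : ∀ i, (Finset.univ.filter fun j => W i j ≠ 0).card = m)
    (hWcol : ∀ j, (Finset.univ.filter fun i => W i j ≠ 0).card = m)
    (hW : W * (Matrix.of fun i j => (W j i) ^ 2) = (m : F) • (1 : Matrix (Fin n) (Fin n) F))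
    (G : Subgroup (Equiv.Perm (Fin n) × Equiv.Perm (Fin n)))
    (hG : ∀ g ∈ G, IsPermAut W g)
    (R : Fin t → Finset (Fin n))
    (hRorb : ∀ i, ∀ x ∈ R i, ∀ w, w ∈ R i ↔ ∃ g ∈ G, g.1 x = w)
    (hRpart : ∀ x : Fin n, ∃! i, x ∈ R i)
    (C : Fin t → Finset (Fin n))
    (hCorb : ∀ j, ∀ y ∈ C j, ∀ z, z ∈ C j ↔ ∃ g ∈ G, g.2 y = z)
    (hCpart : ∀ y : Fin n, ∃! j, y ∈ C j)
    (hRlen : ∀ i, (R i).card = l) (hClen : ∀ j, (C j).card = l)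
    (ρ : Fin t → Fin n) (hρ : ∀ i, ρ i ∈ R i)
    (B : Matrix (Fin t) (Fin b) ℤ)
    (hBent : ∀ i j, B i j = 0 ∨ B i j = 1)
    (hB : B * Bᵀ = ((r : ℤ) - (lam : ℤ)) • (1 : Matrix (Fin t) (Fin t) ℤ)
          + Matrix.of (fun _ _ => (lam : ℤ)))
    (h1 : (r : F) + ((t : F) - 1) * (lam : F) + (m : F) ≠ 0)
    (h2 : (r : F) - (lam : F) + (m : F) ≠ 0)
    (A : Matrix (Fin t) (Fin t ⊕ Fin b) F)
    (hA : A = Matrix.fromCols (Matrix.of fun i j => ∑ z ∈ C j, W (ρ i) z)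
      (B.map (Int.cast : ℤ → F))) :
    (rowSpan F A : Set ((Fin t ⊕ Fin b) → F)) ∩
      {v | ∀ u ∈ rowSpan F A, ∑ k, u k * (v k) ^ 2 = 0} = {0} := by
  -- characteristic 2
  have card4 : ((4 : ℕ) : F) = 0 := by rw [← hF]; exact Nat.cast_card_eq_zero F
  have hchar : ringChar F = 2 := by
    have hdvd : ringChar F ∣ 4 := (CharP.cast_eq_zero_iff F (ringChar F) 4).mp card4
    have hp : (ringChar F).Prime := CharP.char_is_prime F (ringChar F)
    rw [show (4 : ℕ) = 2 ^ 2 by norm_num] at hdvd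
    exact (Nat.prime_dvd_prime_iff_eq hp Nat.prime_two).mp (hp.dvd_of_dvd_pow hdvd)
  haveI : CharP F 2 := hchar ▸ ringChar.charP F
  haveI : Fact (Nat.Prime 2) := ⟨Nat.prime_two⟩
  -- orbit stability
  have memR : ∀ g ∈ G, ∀ (j : Fin t), ∀ y ∈ R j, g.1 y ∈ R j :=
    fun g hg j y hy => (hRorb j y hy (g.1 y)).mpr ⟨g, hg, rfl⟩
  have memC : ∀ g ∈ G, ∀ (j : Fin t), ∀ z ∈ C j, g.2 z ∈ C j :=
    fun g hg j z hz => (hCorb j z hz (g.2 z)).mpr ⟨g, hg, rfl⟩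
  -- the key counting lemma
  have key : ∀ (j j' : Fin t), ∀ z₀ ∈ C j',
      ∑ z' ∈ C j', (W (ρ j) z') ^ 2 = ∑ y ∈ R j, (W y z₀) ^ 2 := by
    intro j j' z₀ hz₀
    have hcount : ∀ α : F, (∑ z' ∈ C j', if W (ρ j) z' = α then 1 else 0 : ℕ)
        = (∑ y ∈ R j, if W y z₀ = α then 1 else 0 : ℕ) := by
      intro α
      have hcol : ∀ z' ∈ C j', (∑ y ∈ R j, if W y z' = α then 1 else 0 : ℕ)
          = ∑ y ∈ R j, if W y z₀ = α then 1 else 0 := by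
        intro z' hz'
        obtain ⟨g, hg, rfl⟩ := (hCorb j' z₀ hz₀ z').mp hz'
        rw [← st15_perm_sum g.1 (R j) (memR g hg j)
          (fun y => (if W y (g.2 z₀) = α then 1 else 0 : ℕ))]
        exact Finset.sum_congr rfl fun y _ => by rw [hG g hg y z₀]
      have hrow : ∀ y ∈ R j, (∑ z' ∈ C j', if W y z' = α then 1 else 0 : ℕ)
          = ∑ z' ∈ C j', if W (ρ j) z' = α then 1 else 0 := by
        intro y hy
        obtain ⟨g, hg, rfl⟩ := (hRorb j (ρ j) (hρ j) y).mp hy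
        rw [← st15_perm_sum g.2 (C j') (memC g hg j')
          (fun z' => (if W (g.1 (ρ j)) z' = α then 1 else 0 : ℕ))]
        exact Finset.sum_congr rfl fun z' _ => by rw [hG g hg (ρ j) z']
      have hl : 0 < l := by rw [← hRlen j]; exact Finset.card_pos.mpr ⟨ρ j, hρ j⟩
      have e1 : ∑ y ∈ R j, ∑ z' ∈ C j', (if W y z' = α then 1 else 0 : ℕ)
          = l * ∑ z' ∈ C j', (if W (ρ j) z' = α then 1 else 0 : ℕ) := by
        rw [Finset.sum_congr rfl hrow, Finset.sum_const, hRlen j, smul_eq_mul]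
      have e2 : ∑ y ∈ R j, ∑ z' ∈ C j', (if W y z' = α then 1 else 0 : ℕ)
          = l * ∑ y ∈ R j, (if W y z₀ = α then 1 else 0 : ℕ) := by
        rw [Finset.sum_comm, Finset.sum_congr rfl hcol, Finset.sum_const, hClen j', smul_eq_mul]
      exact Nat.eq_of_mul_eq_mul_left hl (e1.symm.trans e2)
    rw [st15_sum_by_value (C j') (fun z' => W (ρ j) z') (fun α => α ^ 2),
        st15_sum_by_value (R j) (fun y => W y z₀) (fun α => α ^ 2)]
    exact Finset.sum_congr rfl fun α _ => by rw [hcount α]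
  -- column orbits partition the columns
  have partition : ∀ f : Fin n → F, ∑ j' : Fin t, ∑ z ∈ C j', f z = ∑ z : Fin n, f z := by
    intro f
    have h1' : ∀ j' : Fin t, ∑ z ∈ C j', f z = ∑ z : Fin n, if z ∈ C j' then f z else 0 := by
      intro j'
      rw [Finset.sum_ite_mem, Finset.univ_inter]
    calc ∑ j' : Fin t, ∑ z ∈ C j', f z
        = ∑ j' : Fin t, ∑ z : Fin n, if z ∈ C j' then f z else 0 :=
          Finset.sum_congr rfl fun j' _ => h1' j'
      _ = ∑ z : Fin n, ∑ j' : Fin t, if z ∈ C j' then f z else 0 := Finset.sum_comm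
      _ = ∑ z : Fin n, f z := by
          refine Finset.sum_congr rfl fun z _ => ?_
          obtain ⟨j₀, hj₀, huniq⟩ := hCpart z
          rw [Finset.sum_eq_single j₀]
          · rw [if_pos hj₀]
          · intro j' _ hne
            rw [if_neg (fun h => hne (huniq j' h))]
          · intro h; exact absurd (Finset.mem_univ j₀) h
  -- the orbit matrix identity
  have orbitId : ∀ i j : Fin t, ∑ j' : Fin t,
      (∑ z ∈ C j', W (ρ i) z) * (∑ z' ∈ C j', W (ρ j) z') ^ 2
      = if i = j then (m : F) else 0 := by
    intro i j
    have step1 : ∀ j' : Fin t, (∑ z ∈ C j', W (ρ i) z) * (∑ z' ∈ C j', W (ρ j) z') ^ 2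
        = ∑ z ∈ C j', ∑ y ∈ R j, W (ρ i) z * (W y z) ^ 2 := by
      intro j'
      rw [sum_pow_char, Finset.sum_mul]
      refine Finset.sum_congr rfl fun z hz => ?_
      rw [key j j' z hz, Finset.mul_sum]
    calc ∑ j' : Fin t, (∑ z ∈ C j', W (ρ i) z) * (∑ z' ∈ C j', W (ρ j) z') ^ 2
        = ∑ j' : Fin t, ∑ z ∈ C j', ∑ y ∈ R j, W (ρ i) z * (W y z) ^ 2 :=
          Finset.sum_congr rfl fun j' _ => step1 j'
      _ = ∑ z : Fin n, ∑ y ∈ R j, W (ρ i) z * (W y z) ^ 2 := partition _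
      _ = ∑ y ∈ R j, ∑ z : Fin n, W (ρ i) z * (W y z) ^ 2 := Finset.sum_comm
      _ = ∑ y ∈ R j, if ρ i = y then (m : F) else 0 := by
          refine Finset.sum_congr rfl fun y _ => ?_
          have hWy := congrFun (congrFun hW (ρ i)) y
          simp only [Matrix.mul_apply, Matrix.of_apply, Matrix.smul_apply, Matrix.one_apply,
            smul_eq_mul, mul_ite, mul_one, mul_zero] at hWy
          exact hWy
      _ = if i = j then (m : F) else 0 := by
          rw [Finset.sum_ite_eq]
          by_cases hij : i = j
          · subst hij
            rw [if_pos (hρ i), if_pos rfl]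
          · have hnot : ρ i ∉ R j := fun h => hij ((hRpart (ρ i)).unique (hρ i) h)
            rw [if_neg hnot, if_neg hij]
  -- the B-part identity
  have hBmat : ∀ i j : Fin t,
      ∑ k : Fin b, ((B i k : ℤ) : F) * ((B j k : ℤ) : F) ^ 2
        = (if i = j then ((r : F) - (lam : F)) else 0) + (lam : F) := by
    intro i j
    have hBsq : ∀ k : Fin b, ((B j k : ℤ) : F) ^ 2 = ((B j k : ℤ) : F) := by
      intro k
      rcases hBent j k with h | h <;> rw [h] <;> norm_num
    simp_rw [hBsq]
    have hz : (B * Bᵀ) i j = ((r : ℤ) - (lam : ℤ)) * (if i = j then 1 else 0) + (lam : ℤ) := by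
      rw [hB, Matrix.add_apply, Matrix.smul_apply, Matrix.one_apply, Matrix.of_apply,
        smul_eq_mul]
    have hz2 : ∑ k : Fin b, B i k * B j k
        = ((r : ℤ) - (lam : ℤ)) * (if i = j then 1 else 0) + (lam : ℤ) := by
      rw [← hz]
      simp [Matrix.mul_apply, Matrix.transpose_apply]
    have := congrArg (fun x : ℤ => (x : F)) hz2
    push_cast at this
    rw [this]
    by_cases hij : i = j <;> simp [hij]
  -- the Gram matrix of A
  have hM : ∀ i j : Fin t, ∑ k : Fin t ⊕ Fin b, A i k * (A j k) ^ 2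
      = (if i = j then ((m : F) + (r : F) - (lam : F)) else 0) + (lam : F) := by
    intro i j
    rw [Fintype.sum_sum_type]
    have hinl : ∀ (i' : Fin t) (k : Fin t), A i' (Sum.inl k) = ∑ z ∈ C k, W (ρ i') z := by
      intro i' k; rw [hA]; rfl
    have hinr : ∀ (i' : Fin t) (k : Fin b), A i' (Sum.inr k) = ((B i' k : ℤ) : F) := by
      intro i' k; rw [hA]; rfl
    simp_rw [hinl, hinr]
    rw [orbitId i j, hBmat i j]
    by_cases hij : i = j <;> simp [hij] <;> ring
  -- main argument
  ext v
  simp only [Set.mem_inter_iff, Set.mem_setOf_eq, Set.mem_singleton_iff, SetLike.mem_coe]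
  constructor
  · rintro ⟨hv, hdual⟩
    rw [rowSpan] at hv
    obtain ⟨x, hx⟩ := (Submodule.mem_span_range_iff_exists_fun F).mp hv
    have hvk : ∀ k, v k = ∑ j : Fin t, x j * A j k := by
      intro k
      rw [← hx]
      simp [Finset.sum_apply]
    have heq : ∀ i : Fin t, ∑ j : Fin t, (x j) ^ 2 * ∑ k, A i k * (A j k) ^ 2 = 0 := by
      intro i
      have h0 := hdual (A i) (Submodule.subset_span ⟨i, rfl⟩)
      calc ∑ j : Fin t, (x j) ^ 2 * ∑ k, A i k * (A j k) ^ 2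
          = ∑ j : Fin t, ∑ k, A i k * ((x j) ^ 2 * (A j k) ^ 2) := by
            refine Finset.sum_congr rfl fun j _ => ?_
            rw [Finset.mul_sum]
            exact Finset.sum_congr rfl fun k _ => by ring
        _ = ∑ k, ∑ j : Fin t, A i k * ((x j) ^ 2 * (A j k) ^ 2) := Finset.sum_comm
        _ = ∑ k, A i k * (v k) ^ 2 := by
            refine Finset.sum_congr rfl fun k _ => ?_
            rw [← Finset.mul_sum]
            congr 1
            rw [hvk k, sum_pow_char]
            exact Finset.sum_congr rfl fun j _ => by rw [mul_pow]
        _ = 0 := h0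
    set s : F := ∑ j : Fin t, (x j) ^ 2 with hsdef
    have hrel : ∀ i : Fin t, ((m : F) + (r : F) - (lam : F)) * (x i) ^ 2 + (lam : F) * s = 0 := by
      intro i
      have h0 := heq i
      calc ((m : F) + (r : F) - (lam : F)) * (x i) ^ 2 + (lam : F) * s
          = ∑ j : Fin t, (x j) ^ 2
              * ((if i = j then ((m : F) + (r : F) - (lam : F)) else 0) + (lam : F)) := by
            simp_rw [mul_add, Finset.sum_add_distrib, mul_ite, mul_zero, Finset.sum_ite_eq,
              Finset.mem_univ, if_pos]
            rw [hsdef, Finset.mul_sum]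
            congr 1
            · ring
            · exact Finset.sum_congr rfl fun j _ => mul_comm _ _
        _ = ∑ j : Fin t, (x j) ^ 2 * ∑ k, A i k * (A j k) ^ 2 :=
            Finset.sum_congr rfl fun j _ => by rw [hM i j]
        _ = 0 := h0
    have hsum0 : ((r : F) + ((t : F) - 1) * (lam : F) + (m : F)) * s = 0 := by
      have hts : ∑ i : Fin t, (((m : F) + (r : F) - (lam : F)) * (x i) ^ 2 + (lam : F) * s)
          = 0 := by
        rw [Finset.sum_congr rfl fun i _ => hrel i]
        simp
      rw [Finset.sum_add_distrib, ← Finset.mul_sum, Finset.sum_const, Finset.card_univ,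
        Fintype.card_fin, nsmul_eq_mul] at hts
      calc ((r : F) + ((t : F) - 1) * (lam : F) + (m : F)) * s
          = ((m : F) + (r : F) - (lam : F)) * s + (t : F) * ((lam : F) * s) := by ring
        _ = 0 := hts
    have hs0 : s = 0 := by
      by_contra h
      exact h1 ((mul_eq_zero.mp hsum0).resolve_right h)
    have hx0 : ∀ i, x i = 0 := by
      intro i
      have h0 := hrel i
      rw [hs0, mul_zero, add_zero] at h0
      have hβ : ((m : F) + (r : F) - (lam : F)) ≠ 0 := by
        intro h
        apply h2
        rw [show (r : F) - (lam : F) + (m : F) = (m : F) + (r : F) - (lam : F) by ring]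
        exact h
      have hsq := (mul_eq_zero.mp h0).resolve_left hβ
      exact pow_eq_zero_iff (two_ne_zero) |>.mp hsq
    rw [← hx]
    funext k
    simp [hx0]
  · rintro rfl
    refine ⟨Submodule.zero_mem _, fun u hu => ?_⟩
    simp
end

section
/- Let W be a skew-weighing matrix W(n,m) and let G be a group of permutation automorphisms of W acting with t orbits all of the same length w, such that for every index s the row orbit of s equals the column orbit of s (as subsets of {1,…,n}). Then the t×t row orbit matrix R = [Γ_{ij}] of W with respect to G (indexed by the common orbit partition) is skew symmetric: Γ_{ij} = −Γ_{ji} for all i,j, and in particular Γ_{ii} = 0. -/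
open Matrix BigOperators

/-- Let `W` be a skew-weighing matrix `W(n,m)` and let `G` be a group
of permutation automorphisms of `W` acting with `t` orbits, all of the same length `w`,
such that for every index `s` the row orbit of `s` equals the column orbit of `s` (so the
row and column orbit partitions coincide, given by `R`).  Then the row orbit matrix
`Γ_{ij} = Σ_{z ∈ R j} W (ρ i) z` is skew symmetric: `Γ_{ij} = -Γ_{ji}` and `Γ_{ii} = 0`. -/
theorem statement16 {n m t w : ℕ}
    (W : Matrix (Fin n) (Fin n) ℤ)
    (hWent : ∀ i j, W i j = 0 ∨ W i j = 1 ∨ W i j = -1)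
    (hW : W * Wᵀ = (m : ℤ) • (1 : Matrix (Fin n) (Fin n) ℤ))
    (hskew : Wᵀ = -W)
    (G : Subgroup (Equiv.Perm (Fin n) × Equiv.Perm (Fin n)))
    (hG : ∀ g ∈ G, IsPermAut W g)
    (R : Fin t → Finset (Fin n))
    (hRorb : ∀ i, ∀ x ∈ R i, ∀ u, u ∈ R i ↔ ∃ g ∈ G, g.1 x = u)
    (hCorb : ∀ i, ∀ y ∈ R i, ∀ z, z ∈ R i ↔ ∃ g ∈ G, g.2 y = z)
    (hpart : ∀ x : Fin n, ∃! i, x ∈ R i)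
    (hlen : ∀ i, (R i).card = w)
    (ρ : Fin t → Fin n) (hρ : ∀ i, ρ i ∈ R i) :
    (∀ i j, (∑ z ∈ R j, W (ρ i) z) = -(∑ z ∈ R i, W (ρ j) z)) ∧
    (∀ i, (∑ z ∈ R i, W (ρ i) z) = 0) := by
  have key : ∀ i j : Fin t, (∑ z ∈ R j, W (ρ i) z) = -(∑ z ∈ R i, W (ρ j) z) := by
    intro i j
    -- row sum is independent of the representative of the row orbit
    have hrow : ∀ x ∈ R i, (∑ z ∈ R j, W x z) = ∑ z ∈ R j, W (ρ i) z := by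
      intro x hx
      obtain ⟨g, hgG, hgx⟩ := (hRorb i (ρ i) (hρ i) x).mp hx
      have hiff : ∀ z : Fin n, z ∈ R j ↔ g.2 z ∈ R j := by
        intro z
        constructor
        · intro hz; exact (hCorb j z hz (g.2 z)).mpr ⟨g, hgG, rfl⟩
        · intro hz
          have : (g⁻¹).2 (g.2 z) ∈ R j :=
            (hCorb j (g.2 z) hz ((g⁻¹).2 (g.2 z))).mpr ⟨g⁻¹, inv_mem hgG, rfl⟩
          simpa using this
      calc (∑ z ∈ R j, W x z) = ∑ z ∈ R j, W (g.1 (ρ i)) z := by rw [hgx]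
        _ = ∑ z ∈ R j, W (g.1 (ρ i)) (g.2 z) :=
            (Finset.sum_equiv g.2 hiff (fun z _ => rfl)).symm
        _ = ∑ z ∈ R j, W (ρ i) z :=
            Finset.sum_congr rfl fun z _ => hG g hgG (ρ i) z
    -- column sum is independent of the representative of the column orbit
    have hcol : ∀ y ∈ R j, (∑ x ∈ R i, W x y) = ∑ x ∈ R i, W x (ρ j) := by
      intro y hy
      obtain ⟨g, hgG, hgy⟩ := (hCorb j (ρ j) (hρ j) y).mp hy
      have hiff : ∀ x : Fin n, x ∈ R i ↔ g.1 x ∈ R i := by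
        intro x
        constructor
        · intro hx; exact (hRorb i x hx (g.1 x)).mpr ⟨g, hgG, rfl⟩
        · intro hx
          have : (g⁻¹).1 (g.1 x) ∈ R i :=
            (hRorb i (g.1 x) hx ((g⁻¹).1 (g.1 x))).mpr ⟨g⁻¹, inv_mem hgG, rfl⟩
          simpa using this
      calc (∑ x ∈ R i, W x y) = ∑ x ∈ R i, W x (g.2 (ρ j)) := by rw [hgy]
        _ = ∑ x ∈ R i, W (g.1 x) (g.2 (ρ j)) :=
            (Finset.sum_equiv g.1 hiff (fun x _ => rfl)).symm
        _ = ∑ x ∈ R i, W x (ρ j) :=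
            Finset.sum_congr rfl fun x _ => hG g hgG x (ρ j)
    have h1 : (∑ x ∈ R i, ∑ z ∈ R j, W x z) = (w : ℤ) * ∑ z ∈ R j, W (ρ i) z := by
      rw [Finset.sum_congr rfl hrow, Finset.sum_const, ← hlen i, nsmul_eq_mul]
    have h2 : (∑ x ∈ R i, ∑ z ∈ R j, W x z) = (w : ℤ) * ∑ x ∈ R i, W x (ρ j) := by
      rw [show (∑ x ∈ R i, ∑ z ∈ R j, W x z) = ∑ z ∈ R j, ∑ x ∈ R i, W x z from
        Finset.sum_comm, Finset.sum_congr rfl hcol, Finset.sum_const, ← hlen j,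
        nsmul_eq_mul]
    have hw : (w : ℤ) ≠ 0 := by
      have : 0 < (R i).card := Finset.card_pos.mpr ⟨ρ i, hρ i⟩
      rw [hlen i] at this
      exact_mod_cast this.ne'
    have h3 : (∑ z ∈ R j, W (ρ i) z) = ∑ x ∈ R i, W x (ρ j) :=
      mul_left_cancel₀ hw (h1 ▸ h2)
    rw [h3, ← Finset.sum_neg_distrib]
    refine Finset.sum_congr rfl fun x _ => ?_
    have := congrFun (congrFun hskew x) (ρ j)
    simp only [Matrix.transpose_apply, Matrix.neg_apply] at this
    linarith
  exact ⟨key, fun i => by have := key i i; linarith⟩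
end

section
/- Let W be a skew-weighing matrix W(n,m) and let G be a group of permutation automorphisms of W acting with t orbits all of the same length w, such that for every index s the row orbit of s equals the column orbit of s. Let R be the t×t row orbit matrix of W with respect to G, let B be a t×b point-by-block incidence matrix of an (r,λ)-design on t points, and let α ∈ F_q. If (r + α² + (t−1)λ + m) ≠ 0 and (r + α² − λ + m) ≠ 0 in F_q, then A = [R + α·I_t | B] (entries reduced modulo p) generates an LCD code C of length t+b over F_q. -/
open Matrix BigOperators

/-- Let `W` be a skew-weighing matrix `W(n,m)` and let `G` be a group
of permutation automorphisms of `W` acting with `t` orbits, all of the same length `w`,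
such that the row orbit of each index equals its column orbit (the common partition being
`Orb`).  Let `R` be the `t × t` row orbit matrix of `W`, `B` the `t × b` incidence matrix
of an `(r,λ)`-design on `t` points, and `α ∈ F`.  If `r + α² + (t-1)λ + m ≠ 0` and
`r + α² - λ + m ≠ 0` in `F`, then `A = [R + α·I_t | B]` generates an LCD code of length
`t + b` over `F`. -/
theorem statement17 {F : Type*} [Field F] [Fintype F] {n m t b r lam w : ℕ}
    (hr : 0 < r) (hlam : 0 < lam)
    (W : Matrix (Fin n) (Fin n) ℤ)
    (hWent : ∀ i j, W i j = 0 ∨ W i j = 1 ∨ W i j = -1)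
    (hW : W * Wᵀ = (m : ℤ) • (1 : Matrix (Fin n) (Fin n) ℤ))
    (hskew : Wᵀ = -W)
    (G : Subgroup (Equiv.Perm (Fin n) × Equiv.Perm (Fin n)))
    (hG : ∀ g ∈ G, IsPermAut W g)
    (Orb : Fin t → Finset (Fin n))
    (hRorb : ∀ i, ∀ x ∈ Orb i, ∀ u, u ∈ Orb i ↔ ∃ g ∈ G, g.1 x = u)
    (hCorb : ∀ i, ∀ y ∈ Orb i, ∀ z, z ∈ Orb i ↔ ∃ g ∈ G, g.2 y = z)
    (hpart : ∀ x : Fin n, ∃! i, x ∈ Orb i)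
    (hlen : ∀ i, (Orb i).card = w)
    (ρ : Fin t → Fin n) (hρ : ∀ i, ρ i ∈ Orb i)
    (B : Matrix (Fin t) (Fin b) ℤ)
    (hBent : ∀ i j, B i j = 0 ∨ B i j = 1)
    (hB : B * Bᵀ = ((r : ℤ) - (lam : ℤ)) • (1 : Matrix (Fin t) (Fin t) ℤ)
          + Matrix.of (fun _ _ => (lam : ℤ)))
    (α : F)
    (h1 : (r : F) + α ^ 2 + ((t : F) - 1) * (lam : F) + (m : F) ≠ 0)
    (h2 : (r : F) + α ^ 2 - (lam : F) + (m : F) ≠ 0)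
    (A : Matrix (Fin t) (Fin t ⊕ Fin b) F)
    (hA : A = Matrix.fromCols
      ((Matrix.of fun i j => ∑ z ∈ Orb j, W (ρ i) z).map (Int.cast : ℤ → F)
        + α • (1 : Matrix (Fin t) (Fin t) F))
      (B.map (Int.cast : ℤ → F))) :
    IsLCD (rowSpan F A) := by

  classical
  -- entrywise consequences of the matrix equations
  have hme : ∀ x y : Fin n, (∑ z, W x z * W y z) = if x = y then (m:ℤ) else 0 := by
    intro x y
    have h := congrFun (congrFun hW x) y
    simpa [Matrix.mul_apply, Matrix.one_apply, mul_ite] using h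
  have hWskew : ∀ x y : Fin n, W x y = - W y x := by
    intro x y
    have h := congrFun (congrFun hskew y) x
    simpa using h
  have himg1 : ∀ g ∈ G, ∀ j, (Orb j).image (g.1 : Fin n → Fin n) = Orb j := by
    intro g hg j
    apply Finset.eq_of_subset_of_card_le
    · intro z hz
      obtain ⟨y, hy, rfl⟩ := Finset.mem_image.mp hz
      exact (hRorb j y hy (g.1 y)).mpr ⟨g, hg, rfl⟩
    · rw [Finset.card_image_of_injective _ g.1.injective]
  have himg2 : ∀ g ∈ G, ∀ j, (Orb j).image (g.2 : Fin n → Fin n) = Orb j := by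
    intro g hg j
    apply Finset.eq_of_subset_of_card_le
    · intro z hz
      obtain ⟨y, hy, rfl⟩ := Finset.mem_image.mp hz
      exact (hCorb j y hy (g.2 y)).mpr ⟨g, hg, rfl⟩
    · rw [Finset.card_image_of_injective _ g.2.injective]
  have hrow : ∀ i j (x : Fin n), x ∈ Orb i → ∑ z ∈ Orb j, W x z = ∑ z ∈ Orb j, W (ρ i) z := by
    intro i j x hx
    obtain ⟨g, hg, hgx⟩ := (hRorb i (ρ i) (hρ i) x).mp hx
    calc ∑ z ∈ Orb j, W x z = ∑ z ∈ (Orb j).image (g.2 : Fin n → Fin n), W x z := by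
          rw [himg2 g hg j]
      _ = ∑ z ∈ Orb j, W x (g.2 z) :=
          Finset.sum_image (by intro a _ c _ h; exact g.2.injective h)
      _ = ∑ z ∈ Orb j, W (ρ i) z := by
          refine Finset.sum_congr rfl fun z _ => ?_
          rw [← hgx]
          exact hG g hg (ρ i) z
  have hcolconst : ∀ k j (y : Fin n), y ∈ Orb j →
      ∑ x ∈ Orb k, W x y = ∑ x ∈ Orb k, W x (ρ j) := by
    intro k j y hy
    obtain ⟨g, hg, hgy⟩ := (hCorb j (ρ j) (hρ j) y).mp hy
    calc ∑ x ∈ Orb k, W x y = ∑ x ∈ (Orb k).image (g.1 : Fin n → Fin n), W x y := by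
          rw [himg1 g hg k]
      _ = ∑ x ∈ Orb k, W (g.1 x) y :=
          Finset.sum_image (by intro a _ c _ h; exact g.1.injective h)
      _ = ∑ x ∈ Orb k, W x (ρ j) := by
          refine Finset.sum_congr rfl fun x _ => ?_
          rw [← hgy]
          exact hG g hg x (ρ j)
  have hcol : ∀ k j (y : Fin n), y ∈ Orb j →
      ∑ x ∈ Orb k, W x y = ∑ z ∈ Orb j, W (ρ k) z := by
    intro k j y hy
    have hwpos : 0 < w := by
      rw [← hlen j]
      exact Finset.card_pos.mpr ⟨ρ j, hρ j⟩
    have hw0 : (w:ℤ) ≠ 0 := by exact_mod_cast hwpos.ne'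
    have e1 : ∑ y' ∈ Orb j, ∑ x ∈ Orb k, W x y' = (w:ℤ) * ∑ x ∈ Orb k, W x (ρ j) := by
      rw [Finset.sum_congr rfl (fun y' hy' => hcolconst k j y' hy'), Finset.sum_const,
        hlen j, nsmul_eq_mul]
    have e2 : ∑ y' ∈ Orb j, ∑ x ∈ Orb k, W x y' = (w:ℤ) * ∑ z ∈ Orb j, W (ρ k) z := by
      rw [Finset.sum_comm, Finset.sum_congr rfl (fun x hx => hrow k j x hx), Finset.sum_const,
        hlen k, nsmul_eq_mul]
    rw [hcolconst k j y hy]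
    exact mul_left_cancel₀ hw0 (e1.symm.trans e2)
  have hskewR : ∀ i k, ∑ z ∈ Orb k, W (ρ i) z = - ∑ z ∈ Orb i, W (ρ k) z := by
    intro i k
    have e1 := hcol i k (ρ k) (hρ k)
    have e2 : ∑ x ∈ Orb i, W x (ρ k) = - ∑ z ∈ Orb i, W (ρ k) z := by
      rw [← Finset.sum_neg_distrib]
      exact Finset.sum_congr rfl fun x _ => hWskew x (ρ k)
    rw [← e1, e2]
  have hpartition : ∀ f : Fin n → ℤ, ∑ z, f z = ∑ j, ∑ z ∈ Orb j, f z := by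
    intro f
    have hdisj : ∀ i ∈ (Finset.univ : Finset (Fin t)), ∀ j ∈ Finset.univ, i ≠ j →
        Disjoint (Orb i) (Orb j) := by
      intro i _ j _ hij
      rw [Finset.disjoint_left]
      intro z hzi hzj
      obtain ⟨u, -, hu⟩ := hpart z
      exact hij ((hu i hzi).trans (hu j hzj).symm)
    have huniv : (Finset.univ : Finset (Fin t)).biUnion Orb = Finset.univ := by
      ext z
      simp only [Finset.mem_biUnion, Finset.mem_univ, iff_true, true_and]
      obtain ⟨i, hi, -⟩ := hpart z
      exact ⟨i, hi⟩
    rw [← huniv, Finset.sum_biUnion hdisj]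
  have hRR : ∀ i k, ∑ j, (∑ z ∈ Orb j, W (ρ i) z) * (∑ z ∈ Orb j, W (ρ k) z)
      = if i = k then (m:ℤ) else 0 := by
    intro i k
    have step1 : ∀ j : Fin t, (∑ z ∈ Orb j, W (ρ i) z) * (∑ z ∈ Orb j, W (ρ k) z)
        = ∑ z ∈ Orb j, W (ρ i) z * (∑ x ∈ Orb k, W x z) := by
      intro j
      rw [Finset.sum_mul]
      exact Finset.sum_congr rfl fun z hz => by rw [hcol k j z hz]
    rw [Finset.sum_congr rfl fun j _ => step1 j,
      ← hpartition (fun z => W (ρ i) z * ∑ x ∈ Orb k, W x z)]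
    calc ∑ z, W (ρ i) z * (∑ x ∈ Orb k, W x z)
        = ∑ z, ∑ x ∈ Orb k, W (ρ i) z * W x z :=
          Finset.sum_congr rfl fun z _ => Finset.mul_sum _ _ _
      _ = ∑ x ∈ Orb k, ∑ z, W (ρ i) z * W x z := Finset.sum_comm
      _ = ∑ x ∈ Orb k, (if ρ i = x then (m:ℤ) else 0) :=
          Finset.sum_congr rfl fun x _ => hme (ρ i) x
      _ = if ρ i ∈ Orb k then (m:ℤ) else 0 := Finset.sum_ite_eq (Orb k) (ρ i) (fun _ => (m:ℤ))
      _ = if i = k then (m:ℤ) else 0 := by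
          by_cases h : i = k
          · subst h
            simp [hρ i]
          · have hnot : ρ i ∉ Orb k := by
              intro hmem
              obtain ⟨u, -, hu⟩ := hpart (ρ i)
              exact h ((hu i (hρ i)).trans (hu k hmem).symm)
            simp [h, hnot]
  have hBBz : ∀ i k, (∑ j, B i j * B k j)
      = (if i = k then (r:ℤ) - (lam:ℤ) else 0) + (lam:ℤ) := by
    intro i k
    have h := congrFun (congrFun hB i) k
    simp only [Matrix.mul_apply, Matrix.transpose_apply, Matrix.add_apply, Matrix.smul_apply,
      Matrix.one_apply, Matrix.of_apply, smul_eq_mul, mul_ite, mul_one, mul_zero] at h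
    exact h
  -- pass to F
  set aF : F := (m:F) + α^2 + (r:F) - (lam:F) with haF
  set dF : F := aF + (t:F) * (lam:F) with hdF
  have haF0 : aF ≠ 0 := by
    intro h
    exact h2 (by linear_combination h)
  have hdF0 : dF ≠ 0 := by
    intro h
    exact h1 (by linear_combination h)
  have hAl : ∀ i j : Fin t, A i (Sum.inl j)
      = ((∑ z ∈ Orb j, W (ρ i) z : ℤ) : F) + α * (if i = j then 1 else 0) := by
    intro i j
    rw [hA]
    simp [Matrix.fromCols, Matrix.one_apply]
  have hAr : ∀ (i : Fin t) (j : Fin b), A i (Sum.inr j) = ((B i j : ℤ) : F) := by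
    intro i j
    rw [hA]
    simp [Matrix.fromCols]
  have hMA : ∀ i k, (∑ j : Fin t ⊕ Fin b, A i j * A k j)
      = aF * (if i = k then 1 else 0) + (lam:F) := by
    intro i k
    rw [Fintype.sum_sum_type]
    have hl : ∑ j : Fin t, A i (Sum.inl j) * A k (Sum.inl j)
        = ((m:F) + α^2) * (if i = k then 1 else 0) := by
      have e : ∀ j : Fin t, A i (Sum.inl j) * A k (Sum.inl j) =
          ((∑ z ∈ Orb j, W (ρ i) z : ℤ) : F) * ((∑ z ∈ Orb j, W (ρ k) z : ℤ) : F)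
          + α * (((∑ z ∈ Orb j, W (ρ i) z : ℤ) : F) * (if k = j then 1 else 0))
          + α * ((if i = j then 1 else 0) * ((∑ z ∈ Orb j, W (ρ k) z : ℤ) : F))
          + α^2 * ((if i = j then 1 else 0) * (if k = j then 1 else 0)) := by
        intro j
        rw [hAl i j, hAl k j]
        ring
      rw [Finset.sum_congr rfl fun j _ => e j]
      rw [Finset.sum_add_distrib, Finset.sum_add_distrib, Finset.sum_add_distrib,
        ← Finset.mul_sum, ← Finset.mul_sum, ← Finset.mul_sum]
      have s1 : ∑ j : Fin t, ((∑ z ∈ Orb j, W (ρ i) z : ℤ) : F) *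
          ((∑ z ∈ Orb j, W (ρ k) z : ℤ) : F) = if i = k then (m:F) else 0 := by
        calc ∑ j : Fin t, ((∑ z ∈ Orb j, W (ρ i) z : ℤ) : F) * ((∑ z ∈ Orb j, W (ρ k) z : ℤ) : F)
            = (((∑ j, (∑ z ∈ Orb j, W (ρ i) z) * (∑ z ∈ Orb j, W (ρ k) z)) : ℤ) : F) := by
              push_cast
              ring
          _ = (((if i = k then (m:ℤ) else 0) : ℤ) : F) := by rw [hRR i k]
          _ = if i = k then (m:F) else 0 := by
              split <;> simp
      have s2 : ∑ j : Fin t, ((∑ z ∈ Orb j, W (ρ i) z : ℤ) : F) * (if k = j then 1 else 0)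
          = ((∑ z ∈ Orb k, W (ρ i) z : ℤ) : F) := by
        simp
      have s3 : ∑ j : Fin t, (if i = j then (1:F) else 0) * ((∑ z ∈ Orb j, W (ρ k) z : ℤ) : F)
          = ((∑ z ∈ Orb i, W (ρ k) z : ℤ) : F) := by
        simp
      have s4 : ∑ j : Fin t, (if i = j then (1:F) else 0) * (if k = j then 1 else 0)
          = if i = k then (1:F) else 0 := by
        simp [mul_ite, mul_one, mul_zero, Finset.sum_ite_eq, eq_comm]
      rw [s1, s2, s3, s4]
      have hsk : ((∑ z ∈ Orb i, W (ρ k) z : ℤ) : F) = -((∑ z ∈ Orb k, W (ρ i) z : ℤ) : F) := by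
        have := hskewR i k
        have h2' : (∑ z ∈ Orb i, W (ρ k) z) = -(∑ z ∈ Orb k, W (ρ i) z) := by linarith
        rw [h2']
        push_cast
        ring
      rw [hsk]
      split <;> ring
    have hrt : ∑ j : Fin b, A i (Sum.inr j) * A k (Sum.inr j)
        = ((r:F) - (lam:F)) * (if i = k then 1 else 0) + (lam:F) := by
      calc ∑ j : Fin b, A i (Sum.inr j) * A k (Sum.inr j)
          = ∑ j : Fin b, ((B i j : ℤ) : F) * ((B k j : ℤ) : F) := by
            refine Finset.sum_congr rfl fun j _ => ?_
            rw [hAr i j, hAr k j]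
        _ = (((∑ j, B i j * B k j) : ℤ) : F) := by
            push_cast
            ring
        _ = (((if i = k then (r:ℤ) - (lam:ℤ) else 0) + (lam:ℤ) : ℤ) : F) := by
            rw [hBBz i k]
        _ = ((r:F) - (lam:F)) * (if i = k then 1 else 0) + (lam:F) := by
            split <;> push_cast <;> ring
    rw [hl, hrt, haF]
    split <;> ring
  -- the inverse of the Gram matrix
  set Nf : Fin t → Fin t → F :=
    fun k l => aF⁻¹ * (if k = l then 1 else 0) + (-(lam:F) * (aF⁻¹ * dF⁻¹)) with hNf
  have hMN : ∀ i l, ∑ k, (aF * (if i = k then 1 else 0) + (lam:F)) * Nf k l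
      = if i = l then 1 else 0 := by
    intro i l
    have e : ∀ k, (aF * (if i = k then 1 else 0) + (lam:F)) * Nf k l
        = (aF * aF⁻¹) * ((if i = k then 1 else 0) * (if k = l then 1 else 0))
          + (aF * (-(lam:F) * (aF⁻¹ * dF⁻¹))) * (if i = k then 1 else 0)
          + ((lam:F) * aF⁻¹) * (if k = l then 1 else 0)
          + (lam:F) * (-(lam:F) * (aF⁻¹ * dF⁻¹)) := by
      intro k
      rw [hNf]
      ring
    rw [Finset.sum_congr rfl fun k _ => e k]
    rw [Finset.sum_add_distrib, Finset.sum_add_distrib, Finset.sum_add_distrib,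
      ← Finset.mul_sum, ← Finset.mul_sum, ← Finset.mul_sum, Finset.sum_const]
    have t1 : ∑ k : Fin t, (if i = k then (1:F) else 0) * (if k = l then 1 else 0)
        = if i = l then 1 else 0 := by
      simp [mul_ite, mul_one, mul_zero, Finset.sum_ite_eq, eq_comm]
    have t2 : ∑ k : Fin t, (if i = k then (1:F) else 0) = 1 := by simp
    have t3 : ∑ k : Fin t, (if k = l then (1:F) else 0) = 1 := by simp
    rw [t1, t2, t3, Finset.card_univ, Fintype.card_fin, mul_inv_cancel₀ haF0, nsmul_eq_mul]
    have hd0' : (m:F) + α^2 + (r:F) - (lam:F) + (t:F) * (lam:F) ≠ 0 := by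
      rw [haF] at hdF
      rw [hdF] at hdF0
      exact hdF0
    have key : aF * (-(lam:F) * (aF⁻¹ * dF⁻¹)) + (lam:F) * aF⁻¹
        + (t:F) * ((lam:F) * (-(lam:F) * (aF⁻¹ * dF⁻¹))) = 0 := by
      have hd : dF * dF⁻¹ = 1 := mul_inv_cancel₀ (by rw [hdF]; exact hd0')
      linear_combination (-(lam:F) * aF⁻¹) * hd + ((lam:F) * aF⁻¹ * dF⁻¹) * hdF - ((lam:F) * aF⁻¹ * dF⁻¹) * haF
    linear_combination key
  -- the LCD argument
  rw [IsLCD, eq_bot_iff]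
  intro v hv
  rw [Submodule.mem_inf] at hv
  obtain ⟨hv1, hv2⟩ := hv
  rw [rowSpan] at hv1
  obtain ⟨x, hx⟩ := (Submodule.mem_span_range_iff_exists_fun F).mp hv1
  have hvj : ∀ j, v j = ∑ i, x i * A i j := by
    intro j
    rw [← hx]
    simp [Finset.sum_apply]
  have hxM : ∀ k, ∑ i, x i * (aF * (if i = k then 1 else 0) + (lam:F)) = 0 := by
    intro k
    have h0 : v ⬝ᵥ A k = 0 := hv2 (A k) (Submodule.subset_span ⟨k, rfl⟩)
    calc ∑ i, x i * (aF * (if i = k then 1 else 0) + (lam:F))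
        = ∑ i, x i * (∑ j, A i j * A k j) :=
          Finset.sum_congr rfl fun i _ => by rw [hMA i k]
      _ = ∑ i, ∑ j, x i * (A i j * A k j) :=
          Finset.sum_congr rfl fun i _ => Finset.mul_sum _ _ _
      _ = ∑ j, ∑ i, x i * (A i j * A k j) := Finset.sum_comm
      _ = ∑ j, (∑ i, x i * A i j) * A k j := by
          refine Finset.sum_congr rfl fun j _ => ?_
          rw [Finset.sum_mul]
          exact Finset.sum_congr rfl fun i _ => by ring
      _ = v ⬝ᵥ A k := by
          rw [dotProduct]
          exact Finset.sum_congr rfl fun j _ => by rw [hvj j]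
      _ = 0 := h0
  have hx0 : ∀ l, x l = 0 := by
    intro l
    have key : ∑ k, (∑ i, x i * (aF * (if i = k then 1 else 0) + (lam:F))) * Nf k l = x l := by
      calc ∑ k, (∑ i, x i * (aF * (if i = k then 1 else 0) + (lam:F))) * Nf k l
          = ∑ k, ∑ i, (x i * (aF * (if i = k then 1 else 0) + (lam:F))) * Nf k l :=
            Finset.sum_congr rfl fun k _ => Finset.sum_mul _ _ _
        _ = ∑ i, ∑ k, (x i * (aF * (if i = k then 1 else 0) + (lam:F))) * Nf k l :=
            Finset.sum_comm
        _ = ∑ i, x i * (∑ k, (aF * (if i = k then 1 else 0) + (lam:F)) * Nf k l) := by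
            refine Finset.sum_congr rfl fun i _ => ?_
            rw [Finset.mul_sum]
            exact Finset.sum_congr rfl fun k _ => by ring
        _ = ∑ i, x i * (if i = l then 1 else 0) :=
            Finset.sum_congr rfl fun i _ => by rw [hMN i l]
        _ = x l := by simp
    rw [← key]
    rw [Finset.sum_congr rfl fun k _ => by rw [hxM k]]
    simp
  rw [Submodule.mem_bot, ← hx]
  refine Finset.sum_eq_zero fun i _ => ?_
  rw [hx0 i, zero_smul]
end

section
/- Let W be a weighing matrix W(n,m) and let G be a group of permutation automorphisms of W acting with t row orbits and t column orbits, all of the same length. Let R be the t×t row orbit matrix of W with respect to G and let B be a t×b point-by-block incidence matrix of an (r,λ)-design on t points. If (r + (t−1)λ + m) ≠ 0 and (r − λ + m) ≠ 0 in F_q, then A = [R|B] (entries reduced modulo p) generates an LCD code C of length t+b over F_q. -/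
open Matrix BigOperators

/-- Let `W` be a weighing matrix `W(n,m)` and let `G` be a group of
permutation automorphisms of `W` acting with `t` row orbits and `t` column orbits, all of
the same length `l`.  Let `R` be the `t × t` row orbit matrix of `W` and `B` the `t × b`
incidence matrix of an `(r,λ)`-design on `t` points.  If `r + (t-1)λ + m ≠ 0` and
`r - λ + m ≠ 0` in `F`, then `A = [R | B]` generates an LCD code of length `t + b`
over `F`. -/
theorem statement18 {F : Type*} [Field F] [Fintype F] {n m t b r lam l : ℕ}
    (hr : 0 < r) (hlam : 0 < lam)
    (W : Matrix (Fin n) (Fin n) ℤ)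
    (hWent : ∀ i j, W i j = 0 ∨ W i j = 1 ∨ W i j = -1)
    (hW : W * Wᵀ = (m : ℤ) • (1 : Matrix (Fin n) (Fin n) ℤ))
    (G : Subgroup (Equiv.Perm (Fin n) × Equiv.Perm (Fin n)))
    (hG : ∀ g ∈ G, IsPermAut W g)
    (R : Fin t → Finset (Fin n))
    (hRorb : ∀ i, ∀ x ∈ R i, ∀ u, u ∈ R i ↔ ∃ g ∈ G, g.1 x = u)
    (hRpart : ∀ x : Fin n, ∃! i, x ∈ R i)
    (C : Fin t → Finset (Fin n))
    (hCorb : ∀ j, ∀ y ∈ C j, ∀ z, z ∈ C j ↔ ∃ g ∈ G, g.2 y = z)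
    (hCpart : ∀ y : Fin n, ∃! j, y ∈ C j)
    (hRlen : ∀ i, (R i).card = l) (hClen : ∀ j, (C j).card = l)
    (ρ : Fin t → Fin n) (hρ : ∀ i, ρ i ∈ R i)
    (B : Matrix (Fin t) (Fin b) ℤ)
    (hBent : ∀ i j, B i j = 0 ∨ B i j = 1)
    (hB : B * Bᵀ = ((r : ℤ) - (lam : ℤ)) • (1 : Matrix (Fin t) (Fin t) ℤ)
          + Matrix.of (fun _ _ => (lam : ℤ)))
    (h1 : (r : F) + ((t : F) - 1) * (lam : F) + (m : F) ≠ 0)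
    (h2 : (r : F) - (lam : F) + (m : F) ≠ 0)
    (A : Matrix (Fin t) (Fin t ⊕ Fin b) F)
    (hA : A = Matrix.fromCols
      ((Matrix.of fun i j => ∑ z ∈ C j, W (ρ i) z).map (Int.cast : ℤ → F))
      (B.map (Int.cast : ℤ → F))) :
    IsLCD (rowSpan F A) := by
  classical
  -- orbits are invariant under elements of G
  have hCinv : ∀ g ∈ G, ∀ (j : Fin t) (z : Fin n), z ∈ C j ↔ g.2 z ∈ C j := by
    intro g hg j z
    constructor
    · intro hz
      exact (hCorb j z hz (g.2 z)).2 ⟨g, hg, rfl⟩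
    · intro hz
      refine (hCorb j (g.2 z) hz z).2 ⟨g⁻¹, inv_mem hg, ?_⟩
      simp
  have hRinv : ∀ g ∈ G, ∀ (i : Fin t) (x : Fin n), x ∈ R i ↔ g.1 x ∈ R i := by
    intro g hg i x
    constructor
    · intro hx
      exact (hRorb i x hx (g.1 x)).2 ⟨g, hg, rfl⟩
    · intro hx
      refine (hRorb i (g.1 x) hx x).2 ⟨g⁻¹, inv_mem hg, ?_⟩
      simp
  -- row orbit sums are constant on row orbits
  have key1 : ∀ (i j : Fin t), ∀ x ∈ R i, ∑ z ∈ C j, W x z = ∑ z ∈ C j, W (ρ i) z := by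
    intro i j x hx
    obtain ⟨g, hg, hgx⟩ := (hRorb i (ρ i) (hρ i) x).1 hx
    subst hgx
    exact (Finset.sum_equiv g.2 (fun z => hCinv g hg j z)
      (fun z _ => (hG g hg (ρ i) z).symm)).symm
  -- column sums over a row orbit are constant on column orbits
  have key2 : ∀ (k j : Fin t) (z z' : Fin n), z ∈ C j → z' ∈ C j →
      ∑ x ∈ R k, W x z = ∑ x ∈ R k, W x z' := by
    intro k j z z' hz hz'
    obtain ⟨g, hg, hgz⟩ := (hCorb j z hz z').1 hz'
    subst hgz
    exact Finset.sum_equiv g.1 (fun x => hRinv g hg k x) (fun x _ => (hG g hg x z).symm)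
  have hlne : ∀ (_ : Fin t), (l : ℤ) ≠ 0 := by
    intro i
    have h : 0 < (R i).card := Finset.card_pos.2 ⟨ρ i, hρ i⟩
    rw [hRlen i] at h
    exact_mod_cast h.ne'
  -- the orbit matrix entry equals any column sum over the row orbit
  have hGamma : ∀ (k j : Fin t), ∀ z ∈ C j,
      ∑ x ∈ R k, W x z = ∑ z' ∈ C j, W (ρ k) z' := by
    intro k j z hz
    have e1 : ∑ x ∈ R k, ∑ z' ∈ C j, W x z' = (l : ℤ) * ∑ z' ∈ C j, W (ρ k) z' := by
      rw [Finset.sum_congr rfl (fun x hx => key1 k j x hx), Finset.sum_const, hRlen k,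
        nsmul_eq_mul]
    have e2 : ∑ x ∈ R k, ∑ z' ∈ C j, W x z' = (l : ℤ) * ∑ x ∈ R k, W x z := by
      rw [show ∑ x ∈ R k, ∑ z' ∈ C j, W x z' = ∑ z' ∈ C j, ∑ x ∈ R k, W x z' from Finset.sum_comm, Finset.sum_congr rfl (fun z' hz' => key2 k j z' z hz' hz),
        Finset.sum_const, hClen j, nsmul_eq_mul]
    exact mul_left_cancel₀ (hlne k) (by rw [← e2, e1])
  -- summing over column orbits is summing over all columns
  have hpart : ∀ f : Fin n → ℤ, ∑ j : Fin t, ∑ z ∈ C j, f z = ∑ z : Fin n, f z := by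
    intro f
    have h : ∀ j : Fin t, ∑ z ∈ C j, f z = ∑ z : Fin n, if z ∈ C j then f z else 0 := by
      intro j
      rw [Finset.sum_ite_mem, Finset.univ_inter]
    simp_rw [h]
    rw [Finset.sum_comm]
    refine Finset.sum_congr rfl fun z _ => ?_
    obtain ⟨j0, hj0, huniq⟩ := hCpart z
    rw [Finset.sum_eq_single j0 (fun jj _ hne => if_neg fun hmem => hne (huniq jj hmem))
      (by simp), if_pos hj0]
  -- ρ i ∈ R k iff i = k
  have hmemiff : ∀ i k : Fin t, ρ i ∈ R k ↔ i = k := by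
    intro i k
    constructor
    · intro h
      obtain ⟨j0, _, hu⟩ := hRpart (ρ i)
      exact (hu i (hρ i)).trans (hu k h).symm
    · rintro rfl; exact hρ i
  -- the orbit matrix satisfies Γ Γᵀ = m I over ℤ
  have hGG : ∀ i k : Fin t,
      ∑ j : Fin t, (∑ z ∈ C j, W (ρ i) z) * (∑ z ∈ C j, W (ρ k) z)
        = if i = k then (m : ℤ) else 0 := by
    intro i k
    have step1 : ∀ j : Fin t,
        (∑ z ∈ C j, W (ρ i) z) * (∑ z ∈ C j, W (ρ k) z)
          = ∑ z ∈ C j, W (ρ i) z * ∑ x ∈ R k, W x z := by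
      intro j
      rw [Finset.sum_mul]
      exact Finset.sum_congr rfl fun z hz => by rw [← hGamma k j z hz, mul_comm,
        Finset.sum_mul]
    rw [Finset.sum_congr rfl fun j _ => step1 j, hpart]
    have hWW : ∀ x, ∑ z : Fin n, W (ρ i) z * W x z = if ρ i = x then (m : ℤ) else 0 := by
      intro x
      have h := congrFun (congrFun hW (ρ i)) x
      simpa [Matrix.mul_apply, Matrix.one_apply, mul_ite] using h
    calc ∑ z : Fin n, W (ρ i) z * ∑ x ∈ R k, W x z
        = ∑ x ∈ R k, ∑ z : Fin n, W (ρ i) z * W x z := by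
          simp_rw [Finset.mul_sum]; rw [Finset.sum_comm]
      _ = ∑ x ∈ R k, if ρ i = x then (m : ℤ) else 0 := Finset.sum_congr rfl fun x _ => hWW x
      _ = if ρ i ∈ R k then (m : ℤ) else 0 := Finset.sum_ite_eq _ _ _
      _ = if i = k then (m : ℤ) else 0 := by simp [hmemiff i k]
  -- B Bᵀ entrywise over ℤ
  have hBB : ∀ i k : Fin t, ∑ j, B i j * B k j
      = ((r : ℤ) - (lam : ℤ)) * (if i = k then 1 else 0) + (lam : ℤ) := by
    intro i k
    have h := congrFun (congrFun hB i) k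
    rw [Matrix.mul_apply] at h
    simp only [Matrix.transpose_apply, Matrix.add_apply, Matrix.smul_apply, Matrix.one_apply,
      Matrix.of_apply, smul_eq_mul] at h
    exact h
  -- A Aᵀ entrywise over F
  have hAA : ∀ i k : Fin t, (∑ j, A i j * A k j)
      = (if i = k then (m : F) + (r : F) - (lam : F) else 0) + (lam : F) := by
    intro i k
    have hg := hGG i k
    have hb := hBB i k
    rw [hA]
    rw [Fintype.sum_sum_type]
    simp only [Matrix.fromCols_apply_inl, Matrix.fromCols_apply_inr, Matrix.map_apply,
      Matrix.of_apply]
    have hg' := congrArg (Int.cast : ℤ → F) hg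
    have hb' := congrArg (Int.cast : ℤ → F) hb
    by_cases hik : i = k
    · subst hik
      simp only [if_pos rfl] at hg' hb' ⊢
      push_cast at hg' hb' ⊢
      linear_combination hg' + hb'
    · simp only [if_neg hik] at hg' hb' ⊢
      push_cast at hg' hb' ⊢
      linear_combination hg' + hb'
  -- now the LCD argument
  rw [IsLCD, Submodule.eq_bot_iff]
  rintro v ⟨hvC, hvD⟩
  obtain ⟨c, hc⟩ := (Submodule.mem_span_range_iff_exists_fun F).1 hvC
  have hrowmem : ∀ k : Fin t, A k ∈ rowSpan F A := fun k => Submodule.subset_span ⟨k, rfl⟩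
  have hdot : ∀ k : Fin t, ∑ j, v j * A k j = 0 := fun k => hvD (A k) (hrowmem k)
  have hv : ∀ j, v j = ∑ i, c i * A i j := by
    intro j
    rw [← hc]
    simp [Finset.sum_apply]
  set am : F := (m : F) + (r : F) - (lam : F) with ham
  have heq : ∀ k : Fin t, c k * am + (∑ i, c i) * (lam : F) = 0 := by
    intro k
    have h0 : ∑ i, c i * ((if i = k then am else 0) + (lam : F)) = 0 := by
      calc ∑ i, c i * ((if i = k then am else 0) + (lam : F))
          = ∑ i, c i * (∑ j, A i j * A k j) :=
            Finset.sum_congr rfl fun i _ => by rw [hAA i k]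
        _ = ∑ j, (∑ i, c i * A i j) * A k j := by
            simp_rw [Finset.mul_sum, ← mul_assoc]
            rw [Finset.sum_comm]
            simp_rw [← Finset.sum_mul]
        _ = ∑ j, v j * A k j := Finset.sum_congr rfl fun j _ => by rw [← hv j]
        _ = 0 := hdot k
    calc c k * am + (∑ i, c i) * (lam : F)
        = ∑ i, c i * ((if i = k then am else 0) + (lam : F)) := by
          simp_rw [mul_add, Finset.sum_add_distrib, mul_ite, mul_zero,
            Finset.sum_ite_eq', Finset.mem_univ, if_pos, ← Finset.sum_mul]
      _ = 0 := h0
  have hamne : am ≠ 0 := by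
    intro h
    exact h2 (by rw [show (r : F) - (lam : F) + (m : F) = am from by rw [ham]; ring, h])
  have hS : (∑ i, c i) = 0 := by
    have hsum : (∑ k, (c k * am + (∑ i, c i) * (lam : F))) = 0 := by
      simp [heq]
    rw [Finset.sum_add_distrib, ← Finset.sum_mul, Finset.sum_const, Finset.card_univ,
      Fintype.card_fin, nsmul_eq_mul] at hsum
    have h3 : (∑ i, c i) * (am + (t : F) * (lam : F)) = 0 := by
      rw [mul_add]
      linear_combination hsum
    have hne : am + (t : F) * (lam : F) ≠ 0 := by
      intro h
      exact h1 (by rw [show (r : F) + ((t : F) - 1) * (lam : F) + (m : F)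
        = am + (t : F) * (lam : F) from by rw [ham]; ring, h])
    exact (mul_eq_zero.1 h3).resolve_right hne
  have hck : ∀ k, c k = 0 := by
    intro k
    have h := heq k
    rw [hS, zero_mul, add_zero] at h
    exact (mul_eq_zero.1 h).resolve_right hamne
  rw [← hc]
  simp [hck]
end
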